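/- arXiv:1907.05502 — 5 statements merged into one kernel-verified Lean document; each statement's English description precedes it below -/
import Mathlib

section
/- If T is a reiteratively hypercyclic bounded operator on a separable infinite-dimensional Banach space X, then for every n ≥ 1 the n-fold product T × ⋯ × T is reiteratively hypercyclic. -/
open Filter Topology

/-- The weighted sum `∑_{j=0}^{N} a_j · 1_A(j)`. -/
noncomputable def wSum (a : ℕ → ℝ) (A : Set ℕ) (N : ℕ) : ℝ :=
  ∑ j ∈ Finset.range (N + 1), Set.indicator A a j

/-- The upper `a`-density `d̄_a(A)`. -/
noncomputable def upperDensWith (a : ℕ → ℝ) (A : Set ℕ) : ℝ :=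
  Filter.limsup (fun N => wSum a A N / ∑ j ∈ Finset.range (N + 1), a j) Filter.atTop

/-- The lower `a`-density `d_a(A)`. -/
noncomputable def lowerDensWith (a : ℕ → ℝ) (A : Set ℕ) : ℝ :=
  Filter.liminf (fun N => wSum a A N / ∑ j ∈ Finset.range (N + 1), a j) Filter.atTop

/-- The (unweighted) upper density `d̄(A)`. -/
noncomputable def upperDens (A : Set ℕ) : ℝ :=
  Filter.limsup
    (fun N : ℕ => (∑ j ∈ Finset.range (N + 1), Set.indicator A (fun _ => (1 : ℝ)) j) / (N + 1))
    Filter.atTop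

/-- The upper Banach density `B̄d(A) = lim_N b_N / N`, `b_N = limsup_k #(A ∩ [k+1, k+N])`
(the limit exists, so it coincides with the limsup used here). -/
noncomputable def upperBanachDens (A : Set ℕ) : ℝ :=
  Filter.limsup
    (fun N : ℕ =>
      (Filter.limsup
          (fun k : ℕ => ∑ j ∈ Finset.Icc (k + 1) (k + N), Set.indicator A (fun _ => (1 : ℝ)) j)
          Filter.atTop) / (N : ℝ))
    Filter.atTop

/-- `v_n(a) = a_n / ∑_{j=0}^{n-1} a_j`. -/
noncomputable def vSeq (a : ℕ → ℝ) (n : ℕ) : ℝ := a n / ∑ j ∈ Finset.range n, a j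

/-- The class `S` of weights: positive non-decreasing sequences tending to `+∞` such that
`(v_n(a))_{n ≥ 1}` is non-increasing and tends to `0`. -/
def memS (a : ℕ → ℝ) : Prop :=
  (∀ n, 0 < a n) ∧ Monotone a ∧ Filter.Tendsto a Filter.atTop Filter.atTop ∧
    (∀ m n : ℕ, 1 ≤ m → m ≤ n → vSeq a n ≤ vSeq a m) ∧
    Filter.Tendsto (vSeq a) Filter.atTop (nhds 0)

/-- `A - k = {n : n + k ∈ A}`. -/
def shiftSet (A : Set ℕ) (k : ℕ) : Set ℕ := {n : ℕ | n + k ∈ A}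

/-- A set of natural numbers has bounded gaps (is syndetic). -/
def Syndetic (K : Set ℕ) : Prop := ∃ m : ℕ, ∀ n : ℕ, (K ∩ Set.Icc n (n + m)).Nonempty

/-- The return set `N(x, U) = {n : T^n x ∈ U}`. -/
def retSet {X : Type*} [NormedAddCommGroup X] [NormedSpace ℂ X] (T : X →L[ℂ] X) (x : X)
    (U : Set X) : Set ℕ :=
  {n : ℕ | (T ^ n) x ∈ U}

/-- The set of hypercyclic vectors of `T`. -/
def HCSet {X : Type*} [NormedAddCommGroup X] [NormedSpace ℂ X] (T : X →L[ℂ] X) : Set X :=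
  {x : X | Dense (Set.range fun n : ℕ => (T ^ n) x)}

/-- The set of `U`-frequently hypercyclic vectors of `T`. -/
def UFHCSet {X : Type*} [NormedAddCommGroup X] [NormedSpace ℂ X] (T : X →L[ℂ] X) : Set X :=
  {x : X | ∀ U : Set X, IsOpen U → U.Nonempty → 0 < upperDens (retSet T x U)}

/-- The set of `U`-frequently hypercyclic vectors of `T` with respect to the weight `a`. -/
def UFHCaSet {X : Type*} [NormedAddCommGroup X] [NormedSpace ℂ X] (a : ℕ → ℝ)
    (T : X →L[ℂ] X) : Set X :=
  {x : X | ∀ U : Set X, IsOpen U → U.Nonempty → 0 < upperDensWith a (retSet T x U)}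

/-- The set of reiteratively hypercyclic vectors of `T`. -/
def RHCSet {X : Type*} [NormedAddCommGroup X] [NormedSpace ℂ X] (T : X →L[ℂ] X) : Set X :=
  {x : X | ∀ U : Set X, IsOpen U → U.Nonempty → 0 < upperBanachDens (retSet T x U)}

/-- `T` is `𝒜`-hypercyclic. -/
def AHC {X : Type*} [NormedAddCommGroup X] [NormedSpace ℂ X] (𝒜 : Set (Set ℕ))
    (T : X →L[ℂ] X) : Prop :=
  ∃ x : X, ∀ U : Set X, IsOpen U → U.Nonempty → retSet T x U ∈ 𝒜

/-- The `n`-fold product `T × ⋯ × T` acting diagonally on `Fin n → X`. -/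
noncomputable def nfold {X : Type*} [NormedAddCommGroup X] [NormedSpace ℂ X] (T : X →L[ℂ] X)
    (n : ℕ) : (Fin n → X) →L[ℂ] (Fin n → X) :=
  ContinuousLinearMap.pi fun i => T.comp (ContinuousLinearMap.proj i)

namespace UBD

noncomputable def cnt (A : Set ℕ) (k N : ℕ) : ℝ :=
  ∑ j ∈ Finset.Icc (k + 1) (k + N), Set.indicator A (fun _ => (1 : ℝ)) j

noncomputable def bN (A : Set ℕ) (N : ℕ) : ℝ := Filter.limsup (fun k => cnt A k N) Filter.atTop

lemma uBD_eq (A : Set ℕ) : upperBanachDens A = Filter.limsup (fun N => bN A N / N) Filter.atTop :=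
  rfl

lemma cnt_nonneg (A : Set ℕ) (k N : ℕ) : 0 ≤ cnt A k N :=
  Finset.sum_nonneg fun j _ => Set.indicator_nonneg (fun _ _ => zero_le_one) j

lemma cnt_le (A : Set ℕ) (k N : ℕ) : cnt A k N ≤ N := by
  have h : ∀ j ∈ Finset.Icc (k + 1) (k + N), Set.indicator A (fun _ => (1 : ℝ)) j ≤ 1 := by
    intro j _
    exact Set.indicator_le_self' (fun _ _ => zero_le_one) j |>.trans_eq rfl
      |>.trans (le_of_eq rfl)
  calc cnt A k N ≤ ∑ _j ∈ Finset.Icc (k + 1) (k + N), (1 : ℝ) := Finset.sum_le_sum h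
    _ = (Finset.Icc (k + 1) (k + N)).card • (1:ℝ) := by rw [Finset.sum_const]
    _ = N := by rw [Nat.card_Icc]; simp

lemma cnt_mono {A B : Set ℕ} (h : A ⊆ B) (k N : ℕ) : cnt A k N ≤ cnt B k N :=
  Finset.sum_le_sum fun j _ =>
    Set.indicator_le_indicator_of_subset h (fun _ => zero_le_one) j

lemma cnt_bdd (A : Set ℕ) (N : ℕ) :
    Filter.IsBoundedUnder (· ≤ ·) Filter.atTop (fun k => cnt A k N) :=
  Filter.isBoundedUnder_of ⟨(N : ℝ), fun k => cnt_le A k N⟩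

lemma cnt_cobdd (A : Set ℕ) (N : ℕ) :
    Filter.IsCoboundedUnder (· ≤ ·) Filter.atTop (fun k => cnt A k N) :=
  Filter.isCoboundedUnder_le_of_le Filter.atTop fun k => cnt_nonneg A k N

lemma bN_nonneg (A : Set ℕ) (N : ℕ) : 0 ≤ bN A N :=
  Filter.le_limsup_of_frequently_le
    (Filter.Frequently.of_forall fun k => cnt_nonneg A k N) (cnt_bdd A N)

lemma bN_le (A : Set ℕ) (N : ℕ) : bN A N ≤ N :=
  Filter.limsup_le_of_le (cnt_cobdd A N) (Filter.Eventually.of_forall fun k => cnt_le A k N)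

lemma bN_mono {A B : Set ℕ} (h : A ⊆ B) (N : ℕ) : bN A N ≤ bN B N :=
  Filter.limsup_le_limsup (Filter.Eventually.of_forall fun k => cnt_mono h k N)
    (cnt_cobdd A N) (cnt_bdd B N)

lemma g_nonneg (A : Set ℕ) (N : ℕ) : 0 ≤ bN A N / N := by
  rcases Nat.eq_zero_or_pos N with h | h
  · simp [h]
  · exact div_nonneg (bN_nonneg A N) (by positivity)

lemma g_bdd (A : Set ℕ) :
    Filter.IsBoundedUnder (· ≤ ·) Filter.atTop (fun N => bN A N / N) := by
  refine Filter.isBoundedUnder_of ⟨1, fun N => ?_⟩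
  rcases Nat.eq_zero_or_pos N with h | h
  · simp [h]
  · have hN : (0:ℝ) < N := by exact_mod_cast h
    exact (div_le_one hN).2 (bN_le A N)

lemma g_cobdd (A : Set ℕ) :
    Filter.IsCoboundedUnder (· ≤ ·) Filter.atTop (fun N => bN A N / N) :=
  Filter.isCoboundedUnder_le_of_le Filter.atTop fun N => g_nonneg A N

lemma uBD_mono {A B : Set ℕ} (h : A ⊆ B) : upperBanachDens A ≤ upperBanachDens B := by
  rw [uBD_eq, uBD_eq]
  refine Filter.limsup_le_limsup (Filter.Eventually.of_forall fun N => ?_) (g_cobdd A) (g_bdd B)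
  rcases Nat.eq_zero_or_pos N with h0 | h0
  · simp [h0]
  · have hN : (0:ℝ) < N := by exact_mod_cast h0
    exact (div_le_div_iff_of_pos_right hN).2 (bN_mono h N)



lemma freq_bN {A : Set ℕ} (h : 0 < upperBanachDens A) :
    ∃ᶠ N in Filter.atTop, upperBanachDens A / 2 * N ≤ bN A N ∧ 0 < N := by
  have h2 : upperBanachDens A / 2 < upperBanachDens A := half_lt_self h
  rw [uBD_eq] at h2
  have := Filter.frequently_lt_of_lt_limsup (g_cobdd A) h2
  refine this.mono fun N hN => ?_
  have hNpos : 0 < N := by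
    by_contra h0
    have : N = 0 := by omega
    rw [this] at hN; simp at hN
    exact absurd hN (not_lt.2 (le_of_lt (half_pos h)))
  have hNR : (0:ℝ) < N := by exact_mod_cast hNpos
  exact ⟨(le_div_iff₀ hNR).1 hN.le, hNpos⟩

lemma freq_cnt {A : Set ℕ} {N : ℕ} {c : ℝ} (h : c < bN A N) :
    ∀ k₀ : ℕ, ∃ k, k₀ ≤ k ∧ c < cnt A k N := by
  intro k₀
  have := Filter.frequently_lt_of_lt_limsup (cnt_cobdd A N) h
  rcases (Filter.frequently_atTop.1 this) k₀ with ⟨k, hk, hc⟩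
  exact ⟨k, hk, hc⟩

lemma bN_ge_of_freq {A : Set ℕ} {N : ℕ} {c : ℝ}
    (h : ∃ᶠ k in Filter.atTop, c ≤ cnt A k N) : c ≤ bN A N :=
  Filter.le_limsup_of_frequently_le h (cnt_bdd A N)

lemma uBD_ge_of_freq {A : Set ℕ} {δ : ℝ}
    (h : ∃ᶠ N in Filter.atTop, 0 < N ∧ δ * N ≤ bN A N) : δ ≤ upperBanachDens A := by
  rw [uBD_eq]
  refine Filter.le_limsup_of_frequently_le (h.mono fun N hN => ?_) (g_bdd A)
  have hNR : (0:ℝ) < N := by exact_mod_cast hN.1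
  exact (le_div_iff₀ hNR).2 hN.2

lemma exists_ge_of_pos {A : Set ℕ} (h : 0 < upperBanachDens A) (K : ℕ) :
    ∃ a ∈ A, K ≤ a := by
  by_contra hcon
  push_neg at hcon
  have hcnt : ∀ N k, K ≤ k → cnt A k N = 0 := by
    intro N k hk
    refine Finset.sum_eq_zero fun j hj => ?_
    rw [Finset.mem_Icc] at hj
    have : j ∉ A := fun hja => by have := hcon j hja; omega
    simp [Set.indicator_of_notMem this]
  have hbN : ∀ N, bN A N ≤ 0 := by
    intro N
    refine Filter.limsup_le_of_le (cnt_cobdd A N) ?_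
    filter_upwards [Filter.eventually_ge_atTop K] with k hk
    rw [hcnt N k hk]
  have : upperBanachDens A ≤ 0 := by
    rw [uBD_eq]
    refine Filter.limsup_le_of_le (g_cobdd A) (Filter.Eventually.of_forall fun N => ?_)
    rcases Nat.eq_zero_or_pos N with h0 | h0
    · simp [h0]
    · have hNR : (0:ℝ) < N := by exact_mod_cast h0
      exact div_nonpos_of_nonpos_of_nonneg (hbN N) hNR.le
  linarith

lemma mem_of_pos {A : Set ℕ} (h : 0 < upperBanachDens A) : A.Nonempty := by
  rcases exists_ge_of_pos h 0 with ⟨a, ha, _⟩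
  exact ⟨a, ha⟩

lemma cnt_shift {A B : Set ℕ} {k N p : ℕ}
    (h : ∀ j, j ∈ Finset.Icc (k + 1) (k + N) → j ∈ A → (j + p) ∈ B) :
    cnt A k N ≤ cnt B (k + p) N := by
  unfold cnt
  have himg : Finset.Icc (k + p + 1) (k + p + N) =
      (Finset.Icc (k + 1) (k + N)).image (· + p) := by
    rw [Finset.image_add_right_Icc]
    congr 1 <;> omega
  rw [himg, Finset.sum_image (fun a _ b _ hab => by omega)]
  refine Finset.sum_le_sum fun j hj => ?_
  by_cases hjA : j ∈ A
  · rw [Set.indicator_of_mem hjA, Set.indicator_of_mem (h j hj hjA)]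
  · rw [Set.indicator_of_notMem hjA]
    exact Set.indicator_nonneg (fun _ _ => zero_le_one) _

open scoped Classical in
lemma cnt_eq_card (A : Set ℕ) (k N : ℕ) :
    cnt A k N = ((Finset.Icc (k + 1) (k + N)).filter (fun j => j ∈ A)).card := by
  unfold cnt
  rw [← Finset.sum_filter_add_sum_filter_not _ (fun j => j ∈ A)]
  rw [Finset.sum_congr rfl (fun j hj => Set.indicator_of_mem (Finset.mem_filter.1 hj).2 _),
    Finset.sum_congr rfl (fun j hj => Set.indicator_of_notMem (Finset.mem_filter.1 hj).2 _)]
  simp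


lemma coverage {A : Set ℕ} (hA : 0 < upperBanachDens A) {M : ℕ}
    (hM : 4 / (upperBanachDens A / 2) ≤ M) {t : ℕ → ℕ}
    (ht : ∀ i j, i < j → j ≤ M → t i < t j) :
    ∃ i j, i < j ∧ j ≤ M ∧ ∃ q, q ∈ A ∧ q + (t j - t i) ∈ A := by
  classical
  by_contra hcon
  push_neg at hcon
  set δ := upperBanachDens A / 2 with hδdef
  have hδ : 0 < δ := half_pos hA
  -- choose N
  have hev : ∀ᶠ N : ℕ in Filter.atTop, t M ≤ N ∧ 2 / δ ≤ (N:ℝ) ∧ 1 ≤ N := by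
    have h1 := Filter.eventually_ge_atTop (t M)
    have h2 := Filter.eventually_ge_atTop (Nat.ceil (2 / δ))
    have h3 := Filter.eventually_ge_atTop 1
    filter_upwards [h1, h2, h3] with N hN1 hN2 hN3
    exact ⟨hN1, (Nat.ceil_le.1 (le_refl _)).trans (by exact_mod_cast hN2), hN3⟩
  have hfreq := (freq_bN hA).and_eventually hev
  rcases hfreq.exists with ⟨N, ⟨hbN, hN0⟩, htM, h2δ, _⟩
  -- 2 ≤ δ N
  have hNR : (0:ℝ) < N := by exact_mod_cast hN0
  have h2le : 2 ≤ δ * N := by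
    have := (div_le_iff₀ hδ).1 h2δ
    linarith [mul_comm δ (N:ℝ)]
  -- choose k
  have hc : δ * N - 1 < bN A N := by
    have : δ * N - 1 < δ * N := by linarith
    exact this.trans_le hbN
  rcases freq_cnt hc (t M) with ⟨k, hk, hcnt⟩
  set Aw := (Finset.Icc (k + 1) (k + N)).filter (fun j => j ∈ A) with hAwdef
  have hcard : δ * N - 1 < (Aw.card : ℝ) := by
    rw [← cnt_eq_card]; exact hcnt
  -- the translated sets
  set Gf : ℕ → Finset ℕ := fun i => Aw.image (fun m => m + (t M - t i)) with hGdef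
  have hmono : ∀ i j, i ≤ j → j ≤ M → t i ≤ t j := by
    intro i j hij hjM
    rcases eq_or_lt_of_le hij with rfl | h
    · exact le_refl _
    · exact (ht i j h hjM).le
  have hdisj : ∀ i ∈ Finset.range (M + 1), ∀ j ∈ Finset.range (M + 1), i ≠ j →
      Disjoint (Gf i) (Gf j) := by
    have key : ∀ i j, i < j → j ≤ M → Disjoint (Gf i) (Gf j) := by
      intro i j hij hjM
      rw [Finset.disjoint_left]
      intro p hpi hpj
      rw [hGdef] at hpi hpj
      simp only [Finset.mem_image] at hpi hpj
      rcases hpi with ⟨m, hm, hmp⟩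
      rcases hpj with ⟨m', hm', hmp'⟩
      have hti : t i ≤ t j := (ht i j hij hjM).le
      have htj : t j ≤ t M := hmono j M hjM (le_refl _)
      have hmA : m ∈ A := (Finset.mem_filter.1 hm).2
      have hm'A : m' ∈ A := (Finset.mem_filter.1 hm').2
      have : m + (t j - t i) = m' := by omega
      exact hcon i j hij hjM m hmA (by rw [this]; exact hm'A)
    intro i hi j hj hij
    rcases lt_or_gt_of_ne hij with h | h
    · exact key i j h (by simpa using Nat.lt_succ_iff.1 (Finset.mem_range.1 hj))
    · exact (key j i h (by simpa using Nat.lt_succ_iff.1 (Finset.mem_range.1 hi))).symm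
  -- cardinality bound
  have hsub : (Finset.range (M + 1)).biUnion Gf ⊆ Finset.Icc (k + 1) (k + N + t M) := by
    intro p hp
    rcases Finset.mem_biUnion.1 hp with ⟨i, hi, hpG⟩
    rcases Finset.mem_image.1 hpG with ⟨m, hm, hmp⟩
    have := Finset.mem_Icc.1 (Finset.mem_filter.1 hm).1
    rw [Finset.mem_Icc]
    omega
  have hcards : (M + 1) * Aw.card ≤ N + t M := by
    have h1 : ((Finset.range (M + 1)).biUnion Gf).card =
        ∑ i ∈ Finset.range (M + 1), (Gf i).card := Finset.card_biUnion hdisj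
    have h2 : ∀ i, (Gf i).card = Aw.card := fun i =>
      Finset.card_image_of_injective _ (fun a b hab => by omega)
    have h3 : ((Finset.range (M + 1)).biUnion Gf).card ≤ (Finset.Icc (k+1) (k+N+t M)).card :=
      Finset.card_le_card hsub
    rw [h1] at h3
    simp only [h2, Finset.sum_const, Finset.card_range, smul_eq_mul] at h3
    rwa [Nat.card_Icc, show k + N + t M + 1 - (k + 1) = N + t M by omega] at h3
  -- contradiction over ℝ
  have hMR : 4 / δ ≤ (M:ℝ) := hM
  have hAwR : ((M:ℝ) + 1) * Aw.card ≤ (N:ℝ) + t M := by exact_mod_cast hcards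
  have htMR : (t M : ℝ) ≤ N := by exact_mod_cast htM
  have hhalf : δ * N / 2 < (Aw.card : ℝ) := by linarith
  have hδN2 : 0 < δ * N / 2 := by positivity
  have hstep : (4/δ) * (δ * N / 2) ≤ ((M:ℝ) + 1) * (δ * N / 2) := by
    apply mul_le_mul_of_nonneg_right _ hδN2.le
    linarith
  have heq : (4/δ) * (δ * N / 2) = 2 * N := by
    field_simp; ring
  have hbig : 2 * (N:ℝ) < ((M:ℝ)+1) * Aw.card := by
    calc 2 * (N:ℝ) = (4/δ) * (δ * N / 2) := heq.symm
      _ ≤ ((M:ℝ) + 1) * (δ * N / 2) := hstep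
      _ < ((M:ℝ) + 1) * Aw.card := by
          apply mul_lt_mul_of_pos_left hhalf
          positivity
  linarith

end UBD

namespace UBD

variable {X : Type*} [NormedAddCommGroup X] [NormedSpace ℂ X]

lemma nfold_apply (T : X →L[ℂ] X) {n : ℕ} (w : Fin n → X) (i : Fin n) :
    nfold T n w i = T (w i) := by
  simp [nfold]

lemma nfold_pow_apply (T : X →L[ℂ] X) {n : ℕ} (m : ℕ) (w : Fin n → X) (i : Fin n) :
    ((nfold T n) ^ m) w i = (T ^ m) (w i) := by
  induction m generalizing w with
  | zero => simp
  | succ m ih =>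
    rw [pow_succ, pow_succ, ContinuousLinearMap.mul_apply, ContinuousLinearMap.mul_apply]
    rw [ih (nfold T n w), nfold_apply]

variable {T : X →L[ℂ] X} {x : X}

lemma rhc_pos (hx : x ∈ RHCSet T) {U : Set X} (hU : IsOpen U) (hUne : U.Nonempty) :
    0 < upperBanachDens (retSet T x U) := hx U hU hUne

/-- orbit approximation with a lower bound on the time -/
lemma orbit_approx (hx : x ∈ RHCSet T) (y : X) {ε : ℝ} (hε : 0 < ε) (K : ℕ) :
    ∃ c : ℕ, K ≤ c ∧ ‖(T ^ c) x - y‖ < ε := by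
  have hpos := rhc_pos hx (U := Metric.ball y ε) Metric.isOpen_ball
    ⟨y, Metric.mem_ball_self hε⟩
  rcases exists_ge_of_pos hpos K with ⟨c, hc, hcK⟩
  refine ⟨c, hcK, ?_⟩
  have hmem : (T ^ c) x ∈ Metric.ball y ε := hc
  rwa [Metric.mem_ball, dist_eq_norm] at hmem

/-- menu of times whose pairwise differences are near-zero times -/
lemma menu (hx : x ∈ RHCSet T) (M : ℕ) {θ : ℝ} (hθ : 0 < θ) :
    ∃ t : ℕ → ℕ, (∀ i j, i < j → j ≤ M → t i < t j) ∧
      (∀ i j, i < j → j ≤ M → ‖(T ^ (t j - t i)) x‖ < θ) := by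
  induction M with
  | zero => exact ⟨id, fun i j hij hj => by omega, fun i j hij hj => by omega⟩
  | succ M ih =>
    rcases ih with ⟨t, ht1, ht2⟩
    set D : ℝ := 1 + ∑ i ∈ Finset.range (M + 1), ‖(T ^ (t M - t i) : X →L[ℂ] X)‖ with hD
    have hD1 : (1:ℝ) ≤ D := by
      have : 0 ≤ ∑ i ∈ Finset.range (M + 1), ‖(T ^ (t M - t i) : X →L[ℂ] X)‖ :=
        Finset.sum_nonneg fun i _ => norm_nonneg _
      linarith
    have hDpos : (0:ℝ) < D := by linarith
    have hDle : ∀ i, i ≤ M → ‖(T ^ (t M - t i) : X →L[ℂ] X)‖ ≤ D := by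
      intro i hi
      have := Finset.single_le_sum (f := fun i => ‖(T ^ (t M - t i) : X →L[ℂ] X)‖)
        (fun i _ => norm_nonneg _) (Finset.mem_range.2 (Nat.lt_succ_of_le hi))
      linarith
    rcases orbit_approx hx 0 (div_pos hθ hDpos) 1 with ⟨s, hs1, hsθ⟩
    rw [sub_zero] at hsθ
    refine ⟨fun i => if i ≤ M then t i else t M + s, ?_, ?_⟩
    · intro i j hij hj
      by_cases hjM : j ≤ M
      · have hiM : i ≤ M := by omega
        simp only [if_pos hjM, if_pos hiM]
        exact ht1 i j hij hjM
      · have hjM1 : j = M + 1 := by omega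
        have hiM : i ≤ M := by omega
        simp only [if_pos hiM, if_neg hjM]
        have : t i ≤ t M := by
          rcases Nat.eq_or_lt_of_le hiM with rfl | h
          · exact le_refl _
          · exact (ht1 i M h (le_refl _)).le
        omega
    · intro i j hij hj
      by_cases hjM : j ≤ M
      · have hiM : i ≤ M := by omega
        simp only [if_pos hjM, if_pos hiM]
        exact ht2 i j hij hjM
      · have hiM : i ≤ M := by omega
        simp only [if_pos hiM, if_neg hjM]
        have htile : t i ≤ t M := by
          rcases Nat.eq_or_lt_of_le hiM with rfl | h
          · exact le_refl _
          · exact (ht1 i M h (le_refl _)).le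
        have hsplit : t M + s - t i = (t M - t i) + s := by omega
        rw [hsplit, pow_add, ContinuousLinearMap.mul_apply]
        calc ‖(T ^ (t M - t i)) ((T ^ s) x)‖
            ≤ ‖(T ^ (t M - t i) : X →L[ℂ] X)‖ * ‖(T ^ s) x‖ :=
              ContinuousLinearMap.le_opNorm _ _
          _ ≤ D * ‖(T ^ s) x‖ :=
              mul_le_mul_of_nonneg_right (hDle i hiM) (norm_nonneg _)
          _ < D * (θ / D) := by
              apply mul_lt_mul_of_pos_left hsθ hDpos
          _ = θ := by field_simp

lemma pow_apply_add (T : X →L[ℂ] X) (p q : ℕ) (w : X) :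
    (T ^ (p + q)) w = (T ^ p) ((T ^ q) w) := by
  rw [pow_add, ContinuousLinearMap.mul_apply]

lemma norm_bound_univ {n : ℕ} (f : Fin n → (X →L[ℂ] X)) (i : Fin n) :
    ‖f i‖ ≤ 1 + ∑ j, ‖f j‖ := by
  have h1 := Finset.single_le_sum (f := fun j => ‖f j‖) (fun j _ => norm_nonneg _)
    (Finset.mem_univ i)
  linarith

lemma nfold_transitive (hx : x ∈ RHCSet T) {n : ℕ} (U V : Fin n → Set X)
    (hU : ∀ i, IsOpen (U i)) (hUne : ∀ i, (U i).Nonempty)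
    (hV : ∀ i, IsOpen (V i)) (hVne : ∀ i, (V i).Nonempty) :
    ∃ (y : Fin n → X) (m : ℕ), (∀ i, y i ∈ U i) ∧ (∀ i, (T ^ m) (y i) ∈ V i) := by
  cases isEmpty_or_nonempty (Fin n) with
  | inl hemp => exact ⟨0, 0, fun i => isEmptyElim i, fun i => isEmptyElim i⟩
  | inr hne =>
  choose u hu using hUne
  choose v hv using hVne
  have hrad : ∀ i, ∃ r, 0 < r ∧ Metric.ball (u i) r ⊆ U i ∧ Metric.ball (v i) r ⊆ V i := by
    intro i
    rcases Metric.isOpen_iff.1 (hU i) (u i) (hu i) with ⟨r1, hr1, hr1s⟩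
    rcases Metric.isOpen_iff.1 (hV i) (v i) (hv i) with ⟨r2, hr2, hr2s⟩
    exact ⟨min r1 r2, lt_min hr1 hr2,
      (Metric.ball_subset_ball (min_le_left _ _)).trans hr1s,
      (Metric.ball_subset_ball (min_le_right _ _)).trans hr2s⟩
  choose r hr0 hrU hrV using hrad
  set γ : ℝ := Finset.univ.inf' Finset.univ_nonempty r with hγdef
  have hγ : 0 < γ := (Finset.lt_inf'_iff _).2 fun i _ => hr0 i
  have hγle : ∀ i, γ ≤ r i := fun i => Finset.inf'_le _ (Finset.mem_univ i)
  -- step 1 : a i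
  have ha : ∀ i, ∃ a : ℕ, 1 ≤ a ∧ ‖(T ^ a) x - u i‖ < γ / 2 :=
    fun i => orbit_approx hx (u i) (by positivity) 1
  choose a ha1 ha2 using ha
  set CA : ℝ := 1 + ∑ j, ‖(T ^ (a j) : X →L[ℂ] X)‖ with hCAdef
  have hCA1 : (1:ℝ) ≤ CA := by
    have : (0:ℝ) ≤ ∑ j, ‖(T ^ (a j) : X →L[ℂ] X)‖ :=
      Finset.sum_nonneg fun j _ => norm_nonneg _
    linarith
  have hCApos : (0:ℝ) < CA := by linarith
  have hCAle : ∀ i, ‖(T ^ (a i) : X →L[ℂ] X)‖ ≤ CA :=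
    fun i => norm_bound_univ (fun j => T ^ (a j)) i
  set θ₂ : ℝ := γ / (8 * CA) with hθ₂def
  have hθ₂ : 0 < θ₂ := by positivity
  -- step 2 : z
  obtain ⟨z, _, hz⟩ := orbit_approx hx 0 hθ₂ 0
  rw [sub_zero] at hz
  set CZ : ℝ := 1 + ‖(T ^ z : X →L[ℂ] X)‖ with hCZdef
  have hCZ1 : (1:ℝ) ≤ CZ := by
    have := norm_nonneg (T ^ z : X →L[ℂ] X); linarith
  have hCZpos : (0:ℝ) < CZ := by linarith
  have hCZle : ‖(T ^ z : X →L[ℂ] X)‖ ≤ CZ := by linarith [norm_nonneg (T ^ z : X →L[ℂ] X)]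
  -- step 3 : h i
  have hh : ∀ i, ∃ h : ℕ, z ≤ h ∧ ‖(T ^ h) x - v i‖ < γ / 2 :=
    fun i => orbit_approx hx (v i) (by positivity) z
  choose h hhz hhv using hh
  set CH : ℝ := 1 + ∑ j, ‖(T ^ (h j) : X →L[ℂ] X)‖ with hCHdef
  have hCH1 : (1:ℝ) ≤ CH := by
    have : (0:ℝ) ≤ ∑ j, ‖(T ^ (h j) : X →L[ℂ] X)‖ :=
      Finset.sum_nonneg fun j _ => norm_nonneg _
    linarith
  have hCHpos : (0:ℝ) < CH := by linarith
  have hCHle : ∀ i, ‖(T ^ (h i) : X →L[ℂ] X)‖ ≤ CH :=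
    fun i => norm_bound_univ (fun j => T ^ (h j)) i
  set CH' : ℝ := 1 + ∑ j, ‖(T ^ (h j - z) : X →L[ℂ] X)‖ with hCH'def
  have hCH'1 : (1:ℝ) ≤ CH' := by
    have : (0:ℝ) ≤ ∑ j, ‖(T ^ (h j - z) : X →L[ℂ] X)‖ :=
      Finset.sum_nonneg fun j _ => norm_nonneg _
    linarith
  have hCH'pos : (0:ℝ) < CH' := by linarith
  have hCH'le : ∀ i, ‖(T ^ (h i - z) : X →L[ℂ] X)‖ ≤ CH' :=
    fun i => norm_bound_univ (fun j => T ^ (h j - z)) i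
  set θ₁ : ℝ := γ / (2 * CH') with hθ₁def
  have hθ₁ : 0 < θ₁ := by positivity
  set η : ℝ := min (θ₂ / CZ) (γ / (4 * CH)) with hηdef
  have hη : 0 < η := lt_min (by positivity) (by positivity)
  -- the recurrence set
  set R : Set ℕ := retSet T x (Metric.ball x η) with hRdef
  have hRpos : 0 < upperBanachDens R :=
    rhc_pos hx Metric.isOpen_ball ⟨x, Metric.mem_ball_self hη⟩
  set M : ℕ := Nat.ceil (4 / (upperBanachDens R / 2)) with hMdef
  obtain ⟨t, ht1, ht2⟩ := menu hx M hθ₁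
  obtain ⟨i0, j0, hij0, hj0M, q, hqR, hqdR⟩ :=
    coverage hRpos (Nat.le_ceil _) ht1
  set d : ℕ := t j0 - t i0 with hddef
  have hd : ‖(T ^ d) x‖ < θ₁ := ht2 i0 j0 hij0 hj0M
  have hρ : ‖(T ^ q) x - x‖ < η := by
    have : (T ^ q) x ∈ Metric.ball x η := hqR
    rwa [Metric.mem_ball, dist_eq_norm] at this
  have hρd : ‖(T ^ (q + d)) x - x‖ < η := by
    have : (T ^ (q + d)) x ∈ Metric.ball x η := hqdR
    rwa [Metric.mem_ball, dist_eq_norm] at this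
  refine ⟨fun i => (T ^ a i) x + (T ^ (h i - z + d)) x, z + q, ?_, ?_⟩
  · intro i
    apply hrU i
    apply Metric.ball_subset_ball (hγle i)
    rw [Metric.mem_ball, dist_eq_norm]
    have hcx : ‖(T ^ (h i - z + d)) x‖ < γ / 2 := by
      rw [pow_apply_add]
      calc ‖(T ^ (h i - z)) ((T ^ d) x)‖
          ≤ ‖(T ^ (h i - z) : X →L[ℂ] X)‖ * ‖(T ^ d) x‖ := ContinuousLinearMap.le_opNorm _ _
        _ ≤ CH' * ‖(T ^ d) x‖ := mul_le_mul_of_nonneg_right (hCH'le i) (norm_nonneg _)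
        _ < CH' * θ₁ := mul_lt_mul_of_pos_left hd hCH'pos
        _ = γ / 2 := by rw [hθ₁def]; field_simp
    have hre : (T ^ a i) x + (T ^ (h i - z + d)) x - u i
        = ((T ^ a i) x - u i) + (T ^ (h i - z + d)) x := by abel
    rw [hre]
    calc ‖((T ^ a i) x - u i) + (T ^ (h i - z + d)) x‖
        ≤ ‖(T ^ a i) x - u i‖ + ‖(T ^ (h i - z + d)) x‖ := norm_add_le _ _
      _ < γ / 2 + γ / 2 := add_lt_add (ha2 i) hcx
      _ = γ := by ring
  · intro i
    apply hrV i
    apply Metric.ball_subset_ball (hγle i)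
    rw [Metric.mem_ball, dist_eq_norm]
    have hyi : (T ^ (z + q)) ((T ^ a i) x + (T ^ (h i - z + d)) x)
        = (T ^ (z + q + a i)) x + (T ^ (z + q + (h i - z + d))) x := by
      rw [map_add, pow_apply_add T (z + q) (a i) x,
        pow_apply_add T (z + q) (h i - z + d) x]
    have hA1 : ‖(T ^ (z + q + a i)) x‖ ≤ γ / 4 := by
      have hexp : z + q + a i = a i + (z + q) := by omega
      rw [hexp, pow_apply_add T (a i) (z + q) x, pow_apply_add T z q x]
      have hinner : ‖(T ^ z) ((T ^ q) x)‖ ≤ θ₂ + θ₂ := by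
        have h1 : (T ^ z) ((T ^ q) x) = (T ^ z) x + (T ^ z) ((T ^ q) x - x) := by
          rw [map_sub]; abel
        rw [h1]
        have h2 : ‖(T ^ z) ((T ^ q) x - x)‖ ≤ CZ * η := by
          calc ‖(T ^ z) ((T ^ q) x - x)‖
              ≤ ‖(T ^ z : X →L[ℂ] X)‖ * ‖(T ^ q) x - x‖ := ContinuousLinearMap.le_opNorm _ _
            _ ≤ CZ * η := mul_le_mul hCZle hρ.le (norm_nonneg _) hCZpos.le
        have h3 : CZ * η ≤ θ₂ := by
          have hle : η ≤ θ₂ / CZ := min_le_left _ _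
          calc CZ * η ≤ CZ * (θ₂ / CZ) := mul_le_mul_of_nonneg_left hle hCZpos.le
            _ = θ₂ := by field_simp
        calc ‖(T ^ z) x + (T ^ z) ((T ^ q) x - x)‖
            ≤ ‖(T ^ z) x‖ + ‖(T ^ z) ((T ^ q) x - x)‖ := norm_add_le _ _
          _ ≤ θ₂ + θ₂ := add_le_add hz.le (h2.trans h3)
      calc ‖(T ^ a i) ((T ^ z) ((T ^ q) x))‖
          ≤ ‖(T ^ a i : X →L[ℂ] X)‖ * ‖(T ^ z) ((T ^ q) x)‖ :=
            ContinuousLinearMap.le_opNorm _ _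
        _ ≤ CA * (θ₂ + θ₂) := mul_le_mul (hCAle i) hinner (norm_nonneg _) hCApos.le
        _ = γ / 4 := by rw [hθ₂def]; field_simp; ring
    have hA2 : ‖(T ^ (z + q + (h i - z + d))) x - v i‖ < 3 * γ / 4 := by
      have hexp : z + q + (h i - z + d) = h i + (q + d) := by
        have := hhz i; omega
      rw [hexp, pow_apply_add T (h i) (q + d) x]
      have h1 : (T ^ h i) ((T ^ (q + d)) x) - v i =
          ((T ^ h i) x - v i) + (T ^ h i) ((T ^ (q + d)) x - x) := by
        rw [map_sub]; abel
      rw [h1]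
      have h2 : ‖(T ^ h i) ((T ^ (q + d)) x - x)‖ ≤ γ / 4 := by
        calc ‖(T ^ h i) ((T ^ (q + d)) x - x)‖
            ≤ ‖(T ^ h i : X →L[ℂ] X)‖ * ‖(T ^ (q + d)) x - x‖ :=
              ContinuousLinearMap.le_opNorm _ _
          _ ≤ CH * η := mul_le_mul (hCHle i) hρd.le (norm_nonneg _) hCHpos.le
          _ ≤ γ / 4 := by
              have hle : η ≤ γ / (4 * CH) := min_le_right _ _
              calc CH * η ≤ CH * (γ / (4 * CH)) := mul_le_mul_of_nonneg_left hle hCHpos.le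
                _ = γ / 4 := by field_simp
      calc ‖((T ^ h i) x - v i) + (T ^ h i) ((T ^ (q + d)) x - x)‖
          ≤ ‖(T ^ h i) x - v i‖ + ‖(T ^ h i) ((T ^ (q + d)) x - x)‖ := norm_add_le _ _
        _ < γ / 2 + γ / 4 := add_lt_add_of_lt_of_le (hhv i) h2
        _ = 3 * γ / 4 := by ring
    have hfinal : (T ^ (z + q)) ((T ^ a i) x + (T ^ (h i - z + d)) x) - v i
        = (T ^ (z + q + a i)) x + ((T ^ (z + q + (h i - z + d))) x - v i) := by
      rw [hyi]; abel
    rw [hfinal]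
    calc ‖(T ^ (z + q + a i)) x + ((T ^ (z + q + (h i - z + d))) x - v i)‖
        ≤ ‖(T ^ (z + q + a i)) x‖ + ‖(T ^ (z + q + (h i - z + d))) x - v i‖ := norm_add_le _ _
      _ < γ / 4 + 3 * γ / 4 := add_lt_add_of_le_of_lt hA1 hA2
      _ = γ := by ring


lemma nfold_trans_opens (hx : x ∈ RHCSet T) {n : ℕ} (𝒰 𝒱 : Set (Fin n → X))
    (hUo : IsOpen 𝒰) (hUne : 𝒰.Nonempty) (hVo : IsOpen 𝒱) (hVne : 𝒱.Nonempty) :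
    ∃ (y : Fin n → X) (m : ℕ), y ∈ 𝒰 ∧ ((nfold T n) ^ m) y ∈ 𝒱 := by
  obtain ⟨w, hw⟩ := hUne
  obtain ⟨ε, hε, hball⟩ := Metric.isOpen_iff.1 hUo w hw
  obtain ⟨w', hw'⟩ := hVne
  obtain ⟨ε', hε', hball'⟩ := Metric.isOpen_iff.1 hVo w' hw'
  obtain ⟨y, m, hyU, hyV⟩ := nfold_transitive hx
    (fun i => Metric.ball (w i) ε) (fun i => Metric.ball (w' i) ε')
    (fun i => Metric.isOpen_ball) (fun i => ⟨w i, Metric.mem_ball_self hε⟩)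
    (fun i => Metric.isOpen_ball) (fun i => ⟨w' i, Metric.mem_ball_self hε'⟩)
  refine ⟨y, m, hball ?_, hball' ?_⟩
  · exact (dist_pi_lt_iff hε).2 fun i => hyU i
  · refine (dist_pi_lt_iff hε').2 fun i => ?_
    rw [nfold_pow_apply]
    exact hyV i

lemma exists_dense_orbit [CompleteSpace X] [TopologicalSpace.SeparableSpace X]
    (hx : x ∈ RHCSet T) (n : ℕ) :
    ∃ z : Fin n → X, Dense (Set.range fun m : ℕ => ((nfold T n) ^ m) z) := by
  haveI : SecondCountableTopology X := UniformSpace.secondCountable_of_separable X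
  obtain ⟨B, hBcount, hBempty, hBbasis⟩ :=
    TopologicalSpace.exists_countable_basis (Fin n → X)
  set 𝒢 : Set (Set (Fin n → X)) := (fun b => ⋃ m : ℕ, (((nfold T n) ^ m)) ⁻¹' b) '' B with h𝒢
  have hopen : ∀ s ∈ 𝒢, IsOpen s := by
    rintro s ⟨b, hb, rfl⟩
    exact isOpen_iUnion fun m =>
      (hBbasis.isOpen hb).preimage ((nfold T n) ^ m).continuous
  have hdense : ∀ s ∈ 𝒢, Dense s := by
    rintro s ⟨b, hb, rfl⟩
    rw [dense_iff_inter_open]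
    intro 𝒰 h𝒰o h𝒰ne
    have hbne : b.Nonempty := Set.nonempty_iff_ne_empty.2 fun h => hBempty (h ▸ hb)
    obtain ⟨y, m, hyU, hyV⟩ := nfold_trans_opens hx 𝒰 b h𝒰o h𝒰ne (hBbasis.isOpen hb) hbne
    exact ⟨y, hyU, Set.mem_iUnion.2 ⟨m, hyV⟩⟩
  have hD : Dense (⋂₀ 𝒢) :=
    dense_sInter_of_isOpen hopen (hBcount.image _) hdense
  obtain ⟨z, hz⟩ := hD.nonempty
  refine ⟨z, dense_iff_inter_open.2 fun 𝒲 h𝒲o h𝒲ne => ?_⟩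
  obtain ⟨w, hw⟩ := h𝒲ne
  obtain ⟨b, hbB, hwb, hbsub⟩ := hBbasis.exists_subset_of_mem_open hw h𝒲o
  have hzb : z ∈ ⋃ m : ℕ, (((nfold T n) ^ m)) ⁻¹' b :=
    hz _ (Set.mem_image_of_mem _ hbB)
  obtain ⟨m, hm⟩ := Set.mem_iUnion.1 hzb
  exact ⟨((nfold T n) ^ m) z, hbsub hm, Set.mem_range_self m⟩

end UBD

theorem UBD.stmt_aux {X : Type*} [NormedAddCommGroup X] [NormedSpace ℂ X] [CompleteSpace X]
    [TopologicalSpace.SeparableSpace X] (T : X →L[ℂ] X)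
    (hT : (RHCSet T).Nonempty) (n : ℕ) :
    (RHCSet (nfold T n)).Nonempty := by
  classical
  obtain ⟨x, hx⟩ := hT
  obtain ⟨zz, hzz⟩ := UBD.exists_dense_orbit hx n
  refine ⟨zz, ?_⟩
  intro W hW hWne
  obtain ⟨w, hw⟩ := hWne
  obtain ⟨ε, hε, hball⟩ := Metric.isOpen_iff.1 hW w hw
  -- single box vector
  have hc : ∀ i, ∃ c : ℕ, 0 ≤ c ∧ ‖(T ^ c) x - w i‖ < ε / 4 :=
    fun i => UBD.orbit_approx hx (w i) (by positivity) 0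
  choose c _ hc2 using hc
  set CC : ℝ := 1 + ∑ j, ‖(T ^ (c j) : X →L[ℂ] X)‖ with hCCdef
  have hCC1 : (1:ℝ) ≤ CC := by
    have : (0:ℝ) ≤ ∑ j, ‖(T ^ (c j) : X →L[ℂ] X)‖ :=
      Finset.sum_nonneg fun j _ => norm_nonneg _
    linarith
  have hCCpos : (0:ℝ) < CC := by linarith
  have hCCle : ∀ i, ‖(T ^ (c i) : X →L[ℂ] X)‖ ≤ CC :=
    fun i => UBD.norm_bound_univ (fun j => T ^ (c j)) i
  set η₀ : ℝ := ε / (4 * CC) with hη₀def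
  have hη₀ : 0 < η₀ := by positivity
  set A : Set ℕ := retSet T x (Metric.ball x η₀) with hAdef
  have hApos : 0 < upperBanachDens A :=
    UBD.rhc_pos hx Metric.isOpen_ball ⟨x, Metric.mem_ball_self hη₀⟩
  set y : Fin n → X := fun i => (T ^ (c i)) x with hydef
  have hkey : ∀ j ∈ A, ∀ i, ‖(T ^ j) (y i) - w i‖ < ε / 2 := by
    intro j hj i
    have hj' : ‖(T ^ j) x - x‖ < η₀ := by
      have : (T ^ j) x ∈ Metric.ball x η₀ := hj
      rwa [Metric.mem_ball, dist_eq_norm] at this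
    have hcomm : (T ^ j) (y i) = (T ^ (c i)) ((T ^ j) x) := by
      rw [hydef]
      rw [← UBD.pow_apply_add T j (c i) x, ← UBD.pow_apply_add T (c i) j x, add_comm]
    rw [hcomm]
    have hre : (T ^ (c i)) ((T ^ j) x) - w i
        = (T ^ (c i)) ((T ^ j) x - x) + ((T ^ (c i)) x - w i) := by
      rw [map_sub]; abel
    rw [hre]
    calc ‖(T ^ (c i)) ((T ^ j) x - x) + ((T ^ (c i)) x - w i)‖
        ≤ ‖(T ^ (c i)) ((T ^ j) x - x)‖ + ‖(T ^ (c i)) x - w i‖ := norm_add_le _ _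
      _ < CC * η₀ + ε / 4 := by
          apply add_lt_add_of_le_of_lt _ (hc2 i)
          calc ‖(T ^ (c i)) ((T ^ j) x - x)‖
              ≤ ‖(T ^ (c i) : X →L[ℂ] X)‖ * ‖(T ^ j) x - x‖ :=
                ContinuousLinearMap.le_opNorm _ _
            _ ≤ CC * η₀ := mul_le_mul (hCCle i) hj'.le (norm_nonneg _) hCCpos.le
      _ ≤ ε / 4 + ε / 4 := by
          have : CC * η₀ = ε / 4 := by rw [hη₀def]; field_simp
          linarith
      _ = ε / 2 := by ring
  -- transfer
  set δ' : ℝ := upperBanachDens A / 2 with hδ'def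
  have hδ' : 0 < δ' := half_pos hApos
  have hfreq : ∃ᶠ N in Filter.atTop, 0 < N ∧ δ' / 2 * N ≤
      UBD.bN (retSet (nfold T n) zz W) N := by
    have hev : ∀ᶠ N : ℕ in Filter.atTop, 2 / δ' ≤ (N:ℝ) := by
      have h2 := Filter.eventually_ge_atTop (Nat.ceil (2 / δ'))
      filter_upwards [h2] with N hN2
      exact (Nat.ceil_le.1 (le_refl _)).trans (by exact_mod_cast hN2)
    refine ((UBD.freq_bN hApos).and_eventually hev).mono ?_
    rintro N ⟨⟨hbN, hN0⟩, h2δ⟩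
    rw [← hδ'def] at hbN
    refine ⟨hN0, ?_⟩
    have hNR : (0:ℝ) < N := by exact_mod_cast hN0
    have h2le : 2 ≤ δ' * N := by
      have := (div_le_iff₀ hδ').1 h2δ
      linarith [mul_comm δ' (N:ℝ)]
    -- show frequently in k
    refine UBD.bN_ge_of_freq (Filter.frequently_atTop.2 fun k₀ => ?_)
    have hcA : δ' * N - 1 < UBD.bN A N := lt_of_lt_of_le (by linarith) hbN
    obtain ⟨k, hk, hcnt⟩ := UBD.freq_cnt hcA k₀
    -- operator norm bound on horizon
    set CB : ℝ := 1 + ∑ m ∈ Finset.range (k + N + 1), ‖(T ^ m : X →L[ℂ] X)‖ with hCBdef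
    have hCB1 : (1:ℝ) ≤ CB := by
      have : (0:ℝ) ≤ ∑ m ∈ Finset.range (k + N + 1), ‖(T ^ m : X →L[ℂ] X)‖ :=
        Finset.sum_nonneg fun m _ => norm_nonneg _
      linarith
    have hCBpos : (0:ℝ) < CB := by linarith
    have hCBle : ∀ m, m ≤ k + N → ‖(T ^ m : X →L[ℂ] X)‖ ≤ CB := by
      intro m hm
      have := Finset.single_le_sum (f := fun m => ‖(T ^ m : X →L[ℂ] X)‖)
        (fun m _ => norm_nonneg _) (Finset.mem_range.2 (Nat.lt_succ_of_le hm))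
      linarith
    -- approximate y by the orbit of zz
    have hrpos : 0 < ε / (2 * CB) := by positivity
    obtain ⟨v, hvr, hvb⟩ := hzz.exists_mem_open Metric.isOpen_ball
      ⟨y, Metric.mem_ball_self hrpos⟩
    obtain ⟨p, hp⟩ := hvr
    rw [← hp] at hvb
    have hpdist : dist (((nfold T n) ^ p) zz) y < ε / (2 * CB) := hvb
    -- the shift inclusion
    have hshift : ∀ j, j ∈ Finset.Icc (k + 1) (k + N) → j ∈ A →
        (j + p) ∈ retSet (nfold T n) zz W := by
      intro j hjI hjA
      have hjle : j ≤ k + N := (Finset.mem_Icc.1 hjI).2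
      have hsp : ∀ i, ((nfold T n) ^ (j + p)) zz i
          = (T ^ j) ((((nfold T n) ^ p) zz) i) := by
        intro i
        rw [pow_add, ContinuousLinearMap.mul_apply, UBD.nfold_pow_apply]
      have hmem : ((nfold T n) ^ (j + p)) zz ∈ Metric.ball w ε := by
        refine (dist_pi_lt_iff hε).2 fun i => ?_
        rw [hsp i, dist_eq_norm]
        have hre : (T ^ j) ((((nfold T n) ^ p) zz) i) - w i
            = (T ^ j) ((((nfold T n) ^ p) zz) i - y i) + ((T ^ j) (y i) - w i) := by
          rw [map_sub]; abel
        rw [hre]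
        calc ‖(T ^ j) ((((nfold T n) ^ p) zz) i - y i) + ((T ^ j) (y i) - w i)‖
            ≤ ‖(T ^ j) ((((nfold T n) ^ p) zz) i - y i)‖ + ‖(T ^ j) (y i) - w i‖ :=
              norm_add_le _ _
          _ < ε / 2 + ε / 2 := by
              apply add_lt_add_of_le_of_lt _ (hkey j hjA i)
              calc ‖(T ^ j) ((((nfold T n) ^ p) zz) i - y i)‖
                  ≤ ‖(T ^ j : X →L[ℂ] X)‖ * ‖(((nfold T n) ^ p) zz) i - y i‖ :=
                    ContinuousLinearMap.le_opNorm _ _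
                _ ≤ CB * (ε / (2 * CB)) := by
                    apply mul_le_mul (hCBle j hjle) _ (norm_nonneg _) hCBpos.le
                    calc ‖(((nfold T n) ^ p) zz) i - y i‖
                        = dist ((((nfold T n) ^ p) zz) i) (y i) := (dist_eq_norm _ _).symm
                      _ ≤ dist (((nfold T n) ^ p) zz) y := dist_le_pi_dist _ _ i
                      _ ≤ ε / (2 * CB) := hpdist.le
                _ = ε / 2 := by field_simp
          _ = ε := by ring
      exact hball hmem
    have hcnt2 := UBD.cnt_shift hshift (N := N)
    refine ⟨k + p, le_trans hk (Nat.le_add_right _ _), le_of_lt ?_⟩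
    calc δ' / 2 * (N:ℝ) = δ' * N / 2 := by ring
      _ ≤ δ' * N - 1 := by linarith
      _ < UBD.cnt A k N := hcnt
      _ ≤ UBD.cnt (retSet (nfold T n) zz W) (k + p) N := hcnt2
  have := UBD.uBD_ge_of_freq hfreq
  linarith [half_pos hδ']


/-- If `T` is reiteratively hypercyclic then every `n`-fold product `T × ⋯ × T` (`n ≥ 1`)
is reiteratively hypercyclic. -/
theorem stmt_11 {X : Type*} [NormedAddCommGroup X] [NormedSpace ℂ X] [CompleteSpace X]
    [TopologicalSpace.SeparableSpace X] (hX : ¬FiniteDimensional ℂ X) (T : X →L[ℂ] X)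
    (hT : (RHCSet T).Nonempty) (n : ℕ) (hn : 1 ≤ n) :
    (RHCSet (nfold T n)).Nonempty :=
  UBD.stmt_aux T hT n
end

section
/- Let a be a sequence in the class S and A ⊆ ℕ. Suppose (n_i)_{i∈ℕ} is an increasing sequence of integers such that (∑_{j=0}^{n_i} a_j·1_A(j)) / (∑_{j=0}^{n_i} a_j) → δ as i → ∞. Then for every k ∈ ℕ, (∑_{j=0}^{n_i} a_j·1_{A−k}(j)) / (∑_{j=0}^{n_i} a_j) → δ as i → ∞, and d̄_a(A) = d̄_a(A − k). -/
open Filter Topology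

section AuxStmt12
open Filter

private lemma ind_nonneg' (a : ℕ → ℝ) (hpos : ∀ n, 0 < a n) (B : Set ℕ) (j : ℕ) :
    0 ≤ Set.indicator B a j :=
  Set.indicator_nonneg (fun n _ => (hpos n).le) j

private lemma ind_le' (a : ℕ → ℝ) (hpos : ∀ n, 0 < a n) (B : Set ℕ) (j : ℕ) :
    Set.indicator B a j ≤ a j :=
  Set.indicator_le_self' (fun n _ => (hpos n).le) j

private lemma shift_ind' (a : ℕ → ℝ) (A : Set ℕ) (k j : ℕ) :
    Set.indicator (shiftSet A k) a j = Set.indicator A (fun _ => a j) (j + k) := by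
  classical
  simp only [Set.indicator_apply]
  rfl

private lemma claim1' (a : ℕ → ℝ) (A : Set ℕ) (k : ℕ) (hpos : ∀ n, 0 < a n)
    (hmono : Monotone a) (N : ℕ) (hN : k ≤ N) :
    wSum a (shiftSet A k) N ≤ wSum a A N + k * a N := by
  classical
  have hk1 : N + 1 - k ≤ N + 1 := by omega
  have hsplit : wSum a (shiftSet A k) N =
      (∑ j ∈ Finset.Ico 0 (N + 1 - k), Set.indicator (shiftSet A k) a j)
      + ∑ j ∈ Finset.Ico (N + 1 - k) (N + 1), Set.indicator (shiftSet A k) a j := by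
    rw [wSum, Finset.range_eq_Ico, ← Finset.sum_Ico_consecutive _ (Nat.zero_le _) hk1]
  rw [hsplit]
  have h1 : (∑ j ∈ Finset.Ico 0 (N + 1 - k), Set.indicator (shiftSet A k) a j)
      ≤ wSum a A N := by
    calc (∑ j ∈ Finset.Ico 0 (N + 1 - k), Set.indicator (shiftSet A k) a j)
        ≤ ∑ j ∈ Finset.Ico 0 (N + 1 - k), Set.indicator A a (j + k) := by
          apply Finset.sum_le_sum
          intro j _
          rw [shift_ind']
          classical
          simp only [Set.indicator_apply]
          split
          · exact hmono (Nat.le_add_right j k)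
          · exact le_rfl
      _ = ∑ m ∈ Finset.Ico k (N + 1), Set.indicator A a m := by
          rw [Finset.sum_Ico_eq_sum_range (f := Set.indicator A a) (m := k) (n := N + 1),
            ← Finset.range_eq_Ico]
          exact Finset.sum_congr rfl fun i _ => by rw [Nat.add_comm k i]
      _ ≤ wSum a A N := by
          rw [wSum, Finset.range_eq_Ico]
          apply Finset.sum_le_sum_of_subset_of_nonneg
          · exact Finset.Ico_subset_Ico (Nat.zero_le _) le_rfl
          · intro j _ _; exact ind_nonneg' a hpos A j
  have h2 : (∑ j ∈ Finset.Ico (N + 1 - k) (N + 1), Set.indicator (shiftSet A k) a j)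
      ≤ k * a N := by
    have hb : ∀ j ∈ Finset.Ico (N + 1 - k) (N + 1),
        Set.indicator (shiftSet A k) a j ≤ a N := by
      intro j hj
      rw [Finset.mem_Ico] at hj
      exact (ind_le' a hpos _ j).trans (hmono (by omega))
    calc (∑ j ∈ Finset.Ico (N + 1 - k) (N + 1), Set.indicator (shiftSet A k) a j)
        ≤ (Finset.Ico (N + 1 - k) (N + 1)).card • a N := Finset.sum_le_card_nsmul _ _ _ hb
      _ = k * a N := by
          rw [Nat.card_Ico, nsmul_eq_mul]
          congr 1
          have h : N + 1 - (N + 1 - k) = k := by omega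
          rw [h]
  linarith

private lemma claim2' (a : ℕ → ℝ) (A : Set ℕ) (k : ℕ) (hpos : ∀ n, 0 < a n)
    (hmono : Monotone a) (N : ℕ) (hN : k ≤ N) :
    wSum a A N ≤ wSum a (shiftSet A k) N + 2 * k * a N := by
  classical
  have hk1 : k ≤ N + 1 := by omega
  set M := N + 1 - k with hM
  have hMk : k + M = N + 1 := by omega
  have hsplit : wSum a A N =
      (∑ j ∈ Finset.Ico 0 k, Set.indicator A a j)
      + ∑ j ∈ Finset.Ico k (N + 1), Set.indicator A a j := by
    rw [wSum, Finset.range_eq_Ico, ← Finset.sum_Ico_consecutive _ (Nat.zero_le _) hk1]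
  have hhead : (∑ j ∈ Finset.Ico 0 k, Set.indicator A a j) ≤ k * a N := by
    have hb : ∀ j ∈ Finset.Ico 0 k, Set.indicator A a j ≤ a N := by
      intro j hj
      rw [Finset.mem_Ico] at hj
      exact (ind_le' a hpos A j).trans (hmono (by omega))
    calc (∑ j ∈ Finset.Ico 0 k, Set.indicator A a j)
        ≤ (Finset.Ico 0 k).card • a N := Finset.sum_le_card_nsmul _ _ _ hb
      _ = k * a N := by rw [Nat.card_Ico, nsmul_eq_mul]; norm_num
  have hmain : (∑ j ∈ Finset.Ico k (N + 1), Set.indicator A a j)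
      ≤ wSum a (shiftSet A k) N + k * a N := by
    have hrw : (∑ j ∈ Finset.Ico k (N + 1), Set.indicator A a j)
        = ∑ i ∈ Finset.range M, Set.indicator A a (k + i) := by
      rw [Finset.sum_Ico_eq_sum_range]
    have hterm : ∀ i, Set.indicator A a (k + i)
        ≤ Set.indicator (shiftSet A k) a i + (a (k + i) - a i) := by
      intro i
      simp only [Set.indicator_apply]
      by_cases h : i + k ∈ A
      · have h' : k + i ∈ A := by rwa [Nat.add_comm]
        rw [if_pos h', if_pos (show i ∈ shiftSet A k from h)]
        ring_nf; exact le_rfl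
      · have h' : k + i ∉ A := by rwa [Nat.add_comm]
        rw [if_neg h', if_neg (show i ∉ shiftSet A k from h)]
        have := hmono (Nat.le_add_left i k)
        linarith
    have hT : (∑ i ∈ Finset.range M, (a (k + i) - a i)) ≤ k * a N := by
      rw [Finset.sum_sub_distrib]
      have h1 : (∑ i ∈ Finset.range M, a (k + i)) = ∑ m ∈ Finset.Ico k (N + 1), a m := by
        rw [Finset.sum_Ico_eq_sum_range]
      rw [h1]
      set U := Finset.Ico k (N + 1) with hU
      set V := Finset.range M with hV
      have hsum : ∑ m ∈ U, a m = (∑ m ∈ U ∩ V, a m) + ∑ m ∈ U \ V, a m :=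
        (Finset.sum_inter_add_sum_sdiff U V a).symm
      have h2 : (∑ m ∈ U ∩ V, a m) ≤ ∑ i ∈ V, a i :=
        Finset.sum_le_sum_of_subset_of_nonneg (Finset.inter_subset_right)
          (fun j _ _ => (hpos j).le)
      have h3 : (∑ m ∈ U \ V, a m) ≤ k * a N := by
        have hsub : U \ V ⊆ Finset.Ico M (N + 1) := by
          intro m hm
          simp only [hU, hV, Finset.mem_sdiff, Finset.mem_Ico, Finset.mem_range] at hm ⊢
          omega
        calc (∑ m ∈ U \ V, a m) ≤ ∑ m ∈ Finset.Ico M (N + 1), a m :=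
              Finset.sum_le_sum_of_subset_of_nonneg hsub (fun j _ _ => (hpos j).le)
          _ ≤ (Finset.Ico M (N + 1)).card • a N := by
              apply Finset.sum_le_card_nsmul
              intro j hj
              rw [Finset.mem_Ico] at hj
              exact hmono (by omega)
          _ = k * a N := by
              rw [Nat.card_Ico, nsmul_eq_mul]
              congr 1
              have h : N + 1 - M = k := by omega
              rw [h]
      linarith
    have hsumle : (∑ i ∈ Finset.range M, Set.indicator (shiftSet A k) a i)
        ≤ wSum a (shiftSet A k) N := by
      rw [wSum]
      apply Finset.sum_le_sum_of_subset_of_nonneg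
      · exact Finset.range_subset_range.2 (by omega)
      · intro j _ _; exact ind_nonneg' a hpos _ j
    calc (∑ j ∈ Finset.Ico k (N + 1), Set.indicator A a j)
        = ∑ i ∈ Finset.range M, Set.indicator A a (k + i) := hrw
      _ ≤ ∑ i ∈ Finset.range M,
            (Set.indicator (shiftSet A k) a i + (a (k + i) - a i)) :=
          Finset.sum_le_sum fun i _ => hterm i
      _ = (∑ i ∈ Finset.range M, Set.indicator (shiftSet A k) a i)
            + ∑ i ∈ Finset.range M, (a (k + i) - a i) := Finset.sum_add_distrib
      _ ≤ wSum a (shiftSet A k) N + k * a N := add_le_add hsumle hT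
  rw [hsplit]
  linarith

private lemma helperLimsup' (f1 f2 : ℕ → ℝ) (h10 : ∀ n, 0 ≤ f1 n) (h20 : ∀ n, 0 ≤ f2 n)
    (h21 : ∀ n, f2 n ≤ 1)
    (h : ∀ ε : ℝ, 0 < ε → ∀ᶠ n in atTop, f1 n ≤ f2 n + ε) :
    Filter.limsup f1 Filter.atTop ≤ Filter.limsup f2 Filter.atTop := by
  refine le_of_forall_pos_le_add ?_
  intro ε hε
  have hb2 : IsBoundedUnder (· ≤ ·) atTop f2 :=
    ⟨1, Filter.eventually_map.2 (Eventually.of_forall h21)⟩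
  have hcb2 : IsCoboundedUnder (· ≤ ·) atTop f2 :=
    IsBoundedUnder.isCoboundedUnder_le ⟨0, Filter.eventually_map.2 (Eventually.of_forall h20)⟩
  have hcb1 : IsCoboundedUnder (· ≤ ·) atTop f1 :=
    IsBoundedUnder.isCoboundedUnder_le ⟨0, Filter.eventually_map.2 (Eventually.of_forall h10)⟩
  have hb : IsBoundedUnder (· ≤ ·) atTop (fun n => f2 n + ε) :=
    ⟨1 + ε, Filter.eventually_map.2 (Eventually.of_forall fun n => by linarith [h21 n])⟩
  calc Filter.limsup f1 Filter.atTop ≤ Filter.limsup (fun n => f2 n + ε) Filter.atTop :=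
        Filter.limsup_le_limsup (h ε hε) hcb1 hb
    _ = Filter.limsup f2 Filter.atTop + ε := limsup_add_const atTop f2 ε hb2 hcb2

private lemma limsupAddZero' (f g : ℕ → ℝ) (hg : Tendsto g atTop (nhds 0))
    (hf0 : ∀ n, 0 ≤ f n) (hf1 : ∀ n, f n ≤ 1)
    (hfg0 : ∀ n, 0 ≤ f n + g n) (hfg1 : ∀ n, f n + g n ≤ 1) :
    Filter.limsup (fun n => f n + g n) Filter.atTop = Filter.limsup f Filter.atTop := by
  have hsmall : ∀ ε : ℝ, 0 < ε → ∀ᶠ n in atTop, |g n| < ε := fun ε hε => by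
    filter_upwards [hg.eventually (Metric.ball_mem_nhds 0 hε)] with n hn
    simpa [Real.dist_eq] using hn
  apply le_antisymm
  · apply helperLimsup' _ _ hfg0 hf0 hf1
    intro ε hε
    filter_upwards [hsmall ε hε] with n hn
    have := abs_lt.1 hn
    linarith
  · apply helperLimsup' _ _ hf0 hfg0 hfg1
    intro ε hε
    filter_upwards [hsmall ε hε] with n hn
    have := abs_lt.1 hn
    linarith

end AuxStmt12

/-- Shift invariance of weighted densities along a sequence: if the weighted densities of `A`
along `(n_i)` converge to `δ`, then so do those of `A - k`, and `d̄_a(A) = d̄_a(A - k)`. -/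

theorem stmt_12 (a : ℕ → ℝ) (ha : memS a) (A : Set ℕ) (δ : ℝ) (ni : ℕ → ℕ)
    (hni : StrictMono ni)
    (hlim : Filter.Tendsto
      (fun i => wSum a A (ni i) / ∑ j ∈ Finset.range (ni i + 1), a j)
      Filter.atTop (nhds δ))
    (k : ℕ) :
    Filter.Tendsto
        (fun i => wSum a (shiftSet A k) (ni i) / ∑ j ∈ Finset.range (ni i + 1), a j)
        Filter.atTop (nhds δ) ∧
      upperDensWith a A = upperDensWith a (shiftSet A k) := by
  obtain ⟨hpos, hmono, hinf, hvmono, hv0⟩ := ha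
  set S : ℕ → ℝ := fun N => ∑ j ∈ Finset.range (N + 1), a j with hS
  have hSpos : ∀ N, 0 < S N :=
    fun N => Finset.sum_pos (fun j _ => hpos j) Finset.nonempty_range_add_one
  set f : ℕ → ℝ := fun N => wSum a A N / S N with hf
  set f' : ℕ → ℝ := fun N => wSum a (shiftSet A k) N / S N with hf'
  set g : ℕ → ℝ := fun N => f' N - f N with hgdef
  -- bounds on f, f'
  have hwnn : ∀ (B : Set ℕ) (N : ℕ), 0 ≤ wSum a B N := fun B N =>
    Finset.sum_nonneg fun j _ => ind_nonneg' a hpos B j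
  have hwle : ∀ (B : Set ℕ) (N : ℕ), wSum a B N ≤ S N := fun B N =>
    Finset.sum_le_sum fun j _ => ind_le' a hpos B j
  have hf0 : ∀ N, 0 ≤ f N := fun N => div_nonneg (hwnn A N) (hSpos N).le
  have hf1 : ∀ N, f N ≤ 1 := fun N => (div_le_one (hSpos N)).2 (hwle A N)
  have hf'0 : ∀ N, 0 ≤ f' N := fun N => div_nonneg (hwnn _ N) (hSpos N).le
  have hf'1 : ∀ N, f' N ≤ 1 := fun N => (div_le_one (hSpos N)).2 (hwle _ N)
  -- g tends to 0
  have hgbound : ∀ N, max k 1 ≤ N → |g N| ≤ 2 * k * vSeq a N := by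
    intro N hN
    have hkN : k ≤ N := le_trans (le_max_left _ _) hN
    have h1N : 1 ≤ N := le_trans (le_max_right _ _) hN
    have hc1 := claim1' a A k hpos hmono N hkN
    have hc2 := claim2' a A k hpos hmono N hkN
    have hdiff : |wSum a (shiftSet A k) N - wSum a A N| ≤ 2 * k * a N := by
      rw [abs_sub_le_iff]
      constructor
      · have : (0:ℝ) ≤ k * a N := mul_nonneg (Nat.cast_nonneg k) (hpos N).le
        linarith
      · linarith
    have hg : |g N| = |wSum a (shiftSet A k) N - wSum a A N| / S N := by
      rw [hgdef]
      simp only [hf, hf']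
      rw [div_sub_div_same, abs_div, abs_of_pos (hSpos N)]
    rw [hg]
    have hprev : (0:ℝ) < ∑ j ∈ Finset.range N, a j :=
      Finset.sum_pos (fun j _ => hpos j) (Finset.nonempty_range_iff.2 (by omega))
    have hSN : (∑ j ∈ Finset.range N, a j) ≤ S N := by
      rw [hS]
      apply Finset.sum_le_sum_of_subset_of_nonneg (Finset.range_subset_range.2 (by omega))
      intro j _ _; exact (hpos j).le
    have haS : a N / S N ≤ vSeq a N := by
      rw [vSeq]
      exact div_le_div_of_nonneg_left (hpos N).le hprev hSN
    calc |wSum a (shiftSet A k) N - wSum a A N| / S N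
        ≤ (2 * k * a N) / S N := by
          gcongr
          exact (hSpos N).le
      _ = 2 * k * (a N / S N) := by ring
      _ ≤ 2 * k * vSeq a N := by
          apply mul_le_mul_of_nonneg_left haS
          positivity
  have hg0 : Tendsto g atTop (nhds 0) := by
    have htend : Tendsto (fun N => 2 * (k:ℝ) * vSeq a N) atTop (nhds 0) := by
      have : Tendsto (fun N => 2 * (k:ℝ) * vSeq a N) atTop (nhds (2 * k * 0)) :=
        hv0.const_mul _
      simpa using this
    refine squeeze_zero_norm' ?_ htend
    filter_upwards [Filter.eventually_atTop.2 ⟨max k 1, fun N hN => hgbound N hN⟩] with N hN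
    simpa [Real.norm_eq_abs] using hN
  -- part 1
  have hpart1 : Tendsto
      (fun i => wSum a (shiftSet A k) (ni i) / ∑ j ∈ Finset.range (ni i + 1), a j)
      atTop (nhds δ) := by
    have hni' : Tendsto ni atTop atTop := hni.tendsto_atTop
    have hgc : Tendsto (fun i => g (ni i)) atTop (nhds 0) := hg0.comp hni'
    have : Tendsto (fun i => f (ni i) + g (ni i)) atTop (nhds (δ + 0)) :=
      Tendsto.add hlim hgc
    rw [add_zero] at this
    convert this using 2 with i
    rw [hgdef]
    simp only [hf, hf']
    ring
  refine ⟨hpart1, ?_⟩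
  -- part 2
  have heq : (fun N => wSum a (shiftSet A k) N / S N) = fun N => f N + g N := by
    funext N
    rw [hgdef]
    simp only [hf, hf']
    ring
  have : upperDensWith a (shiftSet A k) = Filter.limsup (fun N => f N + g N) Filter.atTop := by
    rw [upperDensWith, ← heq]
  rw [this, limsupAddZero' f g hg0 hf0 hf1
    (fun N => by have := hf'0 N; rw [hgdef]; simpa using this)
    (fun N => by have := hf'1 N; rw [hgdef]; simpa using this)]
  rfl
end

section
/- Let a be a sequence in the class S and δ > 0. If A ⊆ ℕ satisfies d̄_a(A) > δ, then the set K = {k ∈ ℕ : d̄_a(A ∩ (A − k)) > δ²/2} has bounded gaps. -/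
open Filter Topology

section Aux

variable {a : ℕ → ℝ}

private lemma sumP_pos (hpos : ∀ n, 0 < a n) (N : ℕ) :
    0 < ∑ j ∈ Finset.range (N + 1), a j :=
  Finset.sum_pos (fun i _ => hpos i) ⟨0, Finset.mem_range.mpr (Nat.succ_pos N)⟩

private lemma indic_nonneg (hpos : ∀ n, 0 < a n) (C : Set ℕ) (j : ℕ) :
    0 ≤ Set.indicator C a j :=
  Set.indicator_nonneg (fun n _ => (hpos n).le) j

private lemma indic_le (hpos : ∀ n, 0 < a n) (C : Set ℕ) (j : ℕ) :
    Set.indicator C a j ≤ a j :=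
  Set.indicator_le_self' (fun n _ => (hpos n).le) j

private lemma wSum_nonneg (hpos : ∀ n, 0 < a n) (C : Set ℕ) (N : ℕ) : 0 ≤ wSum a C N :=
  Finset.sum_nonneg fun j _ => indic_nonneg hpos C j

private lemma wSum_le_sum (hpos : ∀ n, 0 < a n) (C : Set ℕ) (N : ℕ) :
    wSum a C N ≤ ∑ j ∈ Finset.range (N + 1), a j :=
  Finset.sum_le_sum fun j _ => indic_le hpos C j

private lemma wSum_mono_N (hpos : ∀ n, 0 < a n) (C : Set ℕ) {N M : ℕ} (h : N ≤ M) :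
    wSum a C N ≤ wSum a C M :=
  Finset.sum_le_sum_of_subset_of_nonneg
    (Finset.range_subset_range.mpr (by omega)) (fun j _ _ => indic_nonneg hpos C j)

private lemma wSum_drop (hpos : ∀ n, 0 < a n) (hmono : Monotone a) (C : Set ℕ) {M' M : ℕ}
    (h : M' ≤ M) : wSum a C M ≤ wSum a C M' + ((M - M' : ℕ) : ℝ) * a M := by
  have hsplit : wSum a C M' + ∑ j ∈ Finset.Ico (M' + 1) (M + 1), Set.indicator C a j
      = wSum a C M := by
    unfold wSum
    simp only [Finset.range_eq_Ico]
    exact Finset.sum_Ico_consecutive _ (by omega) (by omega)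
  have hbound : ∑ j ∈ Finset.Ico (M' + 1) (M + 1), Set.indicator C a j
      ≤ ((M - M' : ℕ) : ℝ) * a M := by
    calc ∑ j ∈ Finset.Ico (M' + 1) (M + 1), Set.indicator C a j
        ≤ ∑ _j ∈ Finset.Ico (M' + 1) (M + 1), a M :=
          Finset.sum_le_sum fun j hj => (indic_le hpos C j).trans
            (hmono (Nat.lt_succ_iff.mp (Finset.mem_Ico.mp hj).2))
      _ = ((M - M' : ℕ) : ℝ) * a M := by
          rw [Finset.sum_const, Nat.card_Ico, nsmul_eq_mul]
          congr 1
          exact Nat.cast_inj.mpr (by omega)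
  linarith

/-- upper bound for the shifted weighted sum -/
private lemma wSum_shift_le (hpos : ∀ n, 0 < a n) (hmono : Monotone a) (C : Set ℕ) (k N : ℕ) :
    wSum a (shiftSet C k) N ≤ wSum a C (N + k) := by
  have h1 : wSum a (shiftSet C k) N ≤ ∑ n ∈ Finset.range (N + 1), Set.indicator C a (n + k) := by
    apply Finset.sum_le_sum
    intro n _
    by_cases hn : n + k ∈ C
    · rw [Set.indicator_of_mem (by exact hn : n ∈ shiftSet C k),
        Set.indicator_of_mem hn]
      exact hmono (by omega)
    · rw [Set.indicator_of_notMem (by exact hn : n ∉ shiftSet C k),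
        Set.indicator_of_notMem hn]
  have h2 : ∑ n ∈ Finset.range (N + 1), Set.indicator C a (n + k)
      = ∑ m ∈ Finset.Ico k (N + 1 + k), Set.indicator C a m := by
    rw [Finset.sum_Ico_eq_sum_range]
    simp only [Nat.add_sub_cancel]
    exact Finset.sum_congr rfl fun n _ => by rw [Nat.add_comm k n]
  have h3 : ∑ m ∈ Finset.Ico k (N + 1 + k), Set.indicator C a m ≤ wSum a C (N + k) := by
    apply Finset.sum_le_sum_of_subset_of_nonneg
    · intro m hm
      simp only [Finset.mem_Ico] at hm
      exact Finset.mem_range.mpr (by omega)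
    · exact fun j _ _ => indic_nonneg hpos C j
  linarith

/-- lower bound for the shifted weighted sum -/
private lemma wSum_shift_ge (hpos : ∀ n, 0 < a n) (hmono : Monotone a) (C : Set ℕ) (k N : ℕ) :
    wSum a C (N + k) - (∑ j ∈ Finset.range (k + 1), a j) - (k : ℝ) * a (N + k)
      ≤ wSum a (shiftSet C k) N := by
  -- pointwise: indicator (shiftSet C k) a n ≥ indicator C a (n+k) - (a (n+k) - a n)
  have h1 : ∑ n ∈ Finset.range (N + 1), (Set.indicator C a (n + k) - (a (n + k) - a n))
      ≤ wSum a (shiftSet C k) N := by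
    apply Finset.sum_le_sum
    intro n _
    by_cases hn : n + k ∈ C
    · rw [Set.indicator_of_mem (by exact hn : n ∈ shiftSet C k), Set.indicator_of_mem hn]
      linarith
    · rw [Set.indicator_of_notMem (by exact hn : n ∉ shiftSet C k),
        Set.indicator_of_notMem hn]
      have := hmono (show n ≤ n + k by omega)
      linarith
  have h2 : ∑ n ∈ Finset.range (N + 1), Set.indicator C a (n + k)
      ≥ wSum a C (N + k) - ∑ j ∈ Finset.range (k + 1), a j := by
    have e1 : ∑ n ∈ Finset.range (N + 1), Set.indicator C a (n + k)
        = ∑ m ∈ Finset.Ico k (N + 1 + k), Set.indicator C a m := by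
      rw [Finset.sum_Ico_eq_sum_range]
      simp only [Nat.add_sub_cancel]
      exact Finset.sum_congr rfl fun n _ => by rw [Nat.add_comm k n]
    have e2 : (∑ m ∈ Finset.range k, Set.indicator C a m)
        + ∑ m ∈ Finset.Ico k (N + 1 + k), Set.indicator C a m
        = ∑ m ∈ Finset.range (N + k + 1), Set.indicator C a m := by
      simp only [Finset.range_eq_Ico]
      rw [show N + 1 + k = N + k + 1 by omega]
      exact Finset.sum_Ico_consecutive _ (by omega) (by omega)
    have e3 : ∑ m ∈ Finset.range k, Set.indicator C a m ≤ ∑ j ∈ Finset.range (k + 1), a j := by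
      apply le_trans (Finset.sum_le_sum fun j _ => indic_le hpos C j)
      exact Finset.sum_le_sum_of_subset_of_nonneg (Finset.range_subset_range.mpr (by omega))
        (fun j _ _ => (hpos j).le)
    have : wSum a C (N + k) = ∑ m ∈ Finset.range (N + k + 1), Set.indicator C a m := rfl
    linarith [e1, e2, e3]
  have h3 : ∑ n ∈ Finset.range (N + 1), (a (n + k) - a n) ≤ (k : ℝ) * a (N + k) := by
    have e1 : ∑ n ∈ Finset.range (N + 1), a (n + k)
        = ∑ m ∈ Finset.Ico k (N + 1 + k), a m := by
      rw [Finset.sum_Ico_eq_sum_range]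
      simp only [Nat.add_sub_cancel]
      exact Finset.sum_congr rfl fun n _ => by rw [Nat.add_comm k n]
    have e2 : (∑ m ∈ Finset.range k, a m) + ∑ m ∈ Finset.Ico k (N + 1 + k), a m
        = ∑ m ∈ Finset.range (N + k + 1), a m := by
      simp only [Finset.range_eq_Ico]
      rw [show N + 1 + k = N + k + 1 by omega]
      exact Finset.sum_Ico_consecutive _ (by omega) (by omega)
    have e3 : (∑ m ∈ Finset.range (N + 1), a m) + ∑ m ∈ Finset.Ico (N + 1) (N + k + 1), a m
        = ∑ m ∈ Finset.range (N + k + 1), a m := by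
      simp only [Finset.range_eq_Ico]
      exact Finset.sum_Ico_consecutive _ (by omega) (by omega)
    have e4 : ∑ m ∈ Finset.Ico (N + 1) (N + k + 1), a m ≤ (k : ℝ) * a (N + k) := by
      calc ∑ m ∈ Finset.Ico (N + 1) (N + k + 1), a m
          ≤ ∑ _m ∈ Finset.Ico (N + 1) (N + k + 1), a (N + k) :=
            Finset.sum_le_sum fun m hm => hmono (Nat.lt_succ_iff.mp (Finset.mem_Ico.mp hm).2)
        _ = (k : ℝ) * a (N + k) := by
            rw [Finset.sum_const, Nat.card_Ico, nsmul_eq_mul]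
            congr 1
            exact Nat.cast_inj.mpr (by omega)
    have e5 : 0 ≤ ∑ m ∈ Finset.range k, a m := Finset.sum_nonneg fun j _ => (hpos j).le
    rw [Finset.sum_sub_distrib]
    linarith [e1, e2, e3, e4, e5]
  have expand : ∑ n ∈ Finset.range (N + 1), (Set.indicator C a (n + k) - (a (n + k) - a n))
      = (∑ n ∈ Finset.range (N + 1), Set.indicator C a (n + k))
        - ∑ n ∈ Finset.range (N + 1), (a (n + k) - a n) := by
    rw [Finset.sum_sub_distrib]
  linarith [h1, h2, h3]

end Aux
section Bonf

variable {a : ℕ → ℝ}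

private lemma pairs_card (r : ℕ) :
    2 * (Finset.univ.filter (fun p : Fin r × Fin r => p.1 < p.2)).card = r * r - r := by
  classical
  set F := Finset.univ.filter (fun p : Fin r × Fin r => p.1 < p.2) with hF
  set F' := Finset.univ.filter (fun p : Fin r × Fin r => p.2 < p.1) with hF'
  have hcard : F.card = F'.card := by
    apply Finset.card_bij (fun p _ => Prod.swap p)
    · intro p hp
      simp only [hF, hF', Finset.mem_filter, Finset.mem_univ, true_and] at hp ⊢
      exact hp
    · intro p hp q hq hpq
      exact Prod.swap_injective hpq
    · intro p hp
      refine ⟨Prod.swap p, ?_, by simp⟩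
      simp only [hF, hF', Finset.mem_filter, Finset.mem_univ, true_and] at hp ⊢
      exact hp
  have hdisj : Disjoint F F' :=
    Finset.disjoint_filter.mpr fun p _ h1 h2 => absurd h2 (lt_asymm h1)
  have hunion : F ∪ F' = (Finset.univ : Finset (Fin r × Fin r)).filter
      (fun p => p.1 ≠ p.2) := by
    rw [hF, hF', ← Finset.filter_or]
    exact Finset.filter_congr fun p _ => by
      constructor
      · rintro (h | h) <;> [exact ne_of_lt h; exact (ne_of_lt h).symm]
      · exact fun h => lt_or_gt_of_ne h
  have hoff : ((Finset.univ : Finset (Fin r × Fin r)).filter (fun p => p.1 ≠ p.2)).card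
      = r * r - r := by
    have : (Finset.univ : Finset (Fin r × Fin r)).filter (fun p => p.1 ≠ p.2)
        = (Finset.univ : Finset (Fin r)).offDiag := by
      ext p
      simp [Finset.mem_offDiag]
    rw [this, Finset.offDiag_card]
    simp
  have hcu := Finset.card_union_of_disjoint hdisj
  rw [hunion, hoff] at hcu
  omega

private lemma bonferroni (hpos : ∀ n, 0 < a n) {r : ℕ} (B : Fin r → Set ℕ) (N : ℕ) :
    (∑ i : Fin r, wSum a (B i) N) -
      ∑ p ∈ Finset.univ.filter (fun p : Fin r × Fin r => p.1 < p.2),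
        wSum a (B p.1 ∩ B p.2) N ≤ ∑ j ∈ Finset.range (N + 1), a j := by
  classical
  rw [sub_le_iff_le_add]
  unfold wSum
  rw [Finset.sum_comm]
  rw [Finset.sum_comm (s := Finset.univ.filter (fun p : Fin r × Fin r => p.1 < p.2))]
  rw [← Finset.sum_add_distrib]
  apply Finset.sum_le_sum
  intro j _
  -- pointwise Bonferroni
  set T := Finset.univ.filter (fun i : Fin r => j ∈ B i) with hT
  have e1 : ∑ i : Fin r, Set.indicator (B i) a j = (T.card : ℝ) * a j := by
    rw [show (∑ i : Fin r, Set.indicator (B i) a j)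
        = ∑ i : Fin r, (if j ∈ B i then a j else 0) from
      Finset.sum_congr rfl fun i _ => Set.indicator_apply (B i) a j]
    rw [Finset.sum_ite, Finset.sum_const, Finset.sum_const]
    simp [hT, nsmul_eq_mul]
  set G := (Finset.univ.filter (fun p : Fin r × Fin r => p.1 < p.2)).filter
    (fun p => j ∈ B p.1 ∧ j ∈ B p.2) with hG
  have e2 : ∑ p ∈ Finset.univ.filter (fun p : Fin r × Fin r => p.1 < p.2),
      Set.indicator (B p.1 ∩ B p.2) a j = (G.card : ℝ) * a j := by
    rw [show (∑ p ∈ Finset.univ.filter (fun p : Fin r × Fin r => p.1 < p.2),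
        Set.indicator (B p.1 ∩ B p.2) a j)
        = ∑ p ∈ Finset.univ.filter (fun p : Fin r × Fin r => p.1 < p.2),
          (if j ∈ B p.1 ∧ j ∈ B p.2 then a j else 0) from
      Finset.sum_congr rfl fun p _ => by
        rw [Set.indicator_apply]; congr 1]
    rw [Finset.sum_ite, Finset.sum_const, Finset.sum_const]
    simp [hG, nsmul_eq_mul]
  have hcard : T.card ≤ G.card + 1 := by
    rcases Finset.eq_empty_or_nonempty T with hTe | hTne
    · simp [hTe]
    · set t0 := T.min' hTne with ht0
      have ht0T : t0 ∈ T := T.min'_mem hTne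
      have hinj : ∀ t ∈ T.erase t0, (t0, t) ∈ G := by
        intro t ht
        have htT : t ∈ T := Finset.mem_of_mem_erase ht
        have hlt : t0 < t := lt_of_le_of_ne (T.min'_le t htT)
          (Ne.symm (Finset.ne_of_mem_erase ht))
        simp only [hG, Finset.mem_filter, Finset.mem_univ, true_and]
        refine ⟨hlt, ?_, ?_⟩
        · simpa [hT] using (Finset.mem_filter.mp ht0T).2
        · simpa [hT] using (Finset.mem_filter.mp htT).2
      have : (T.erase t0).card ≤ G.card := by
        apply Finset.card_le_card_of_injOn (fun t => (t0, t)) (fun t ht => hinj t ht)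
        intro x _ y _ h
        exact (Prod.mk.injEq _ _ _ _).mp h |>.2
      have := Finset.card_erase_of_mem ht0T
      omega
  rw [e1, e2]
  have : (T.card : ℝ) ≤ (G.card : ℝ) + 1 := by exact_mod_cast hcard
  nlinarith [(hpos j).le]

end Bonf
section Main

variable {a : ℕ → ℝ}

private lemma ratio_bddBelow (hpos : ∀ n, 0 < a n) (C : Set ℕ) :
    Filter.IsBoundedUnder (· ≥ ·) Filter.atTop
      (fun M => wSum a C M / ∑ j ∈ Finset.range (M + 1), a j) :=
  Filter.isBoundedUnder_of ⟨0, fun M =>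
    div_nonneg (wSum_nonneg hpos C M) (sumP_pos hpos M).le⟩

private lemma ratio_bddAbove (hpos : ∀ n, 0 < a n) (C : Set ℕ) :
    Filter.IsBoundedUnder (· ≤ ·) Filter.atTop
      (fun M => wSum a C M / ∑ j ∈ Finset.range (M + 1), a j) :=
  Filter.isBoundedUnder_of ⟨1, fun M =>
    (div_le_one (sumP_pos hpos M)).mpr (wSum_le_sum hpos C M)⟩

private lemma udw_le_one (hpos : ∀ n, 0 < a n) (C : Set ℕ) : upperDensWith a C ≤ 1 :=
  Filter.limsup_le_of_le ((ratio_bddBelow hpos C).isCoboundedUnder_le)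
    (Filter.Eventually.of_forall fun M =>
      (div_le_one (sumP_pos hpos M)).mpr (wSum_le_sum hpos C M))

set_option maxHeartbeats 1000000 in
theorem stmt_13' (a : ℕ → ℝ) (ha : memS a) (δ : ℝ) (hδ : 0 < δ) (A : Set ℕ)
    (hA : δ < upperDensWith a A) :
    Syndetic {k : ℕ | δ ^ 2 / 2 < upperDensWith a (A ∩ shiftSet A k)} := by
  classical
  obtain ⟨hpos, hmono, htop, hvmono, hv0⟩ := ha
  by_contra hns
  have hδ1 : δ < 1 := lt_of_lt_of_le hA (udw_le_one hpos A)
  -- abbreviation for the total weight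
  set P : ℕ → ℝ := fun M => ∑ j ∈ Finset.range (M + 1), a j with hP
  have hPpos : ∀ M, 0 < P M := fun M => sumP_pos hpos M
  -- arbitrarily long gaps
  have hgap : ∀ m : ℕ, ∃ n : ℕ, ∀ x, n ≤ x → x ≤ n + m →
      ¬ (δ ^ 2 / 2 < upperDensWith a (A ∩ shiftSet A x)) := by
    intro m
    by_contra h
    push_neg at h
    refine hns ⟨m, fun n => ?_⟩
    obtain ⟨x, h1, h2, h3⟩ := h n
    exact ⟨x, h3, Set.mem_Icc.mpr ⟨h1, h2⟩⟩
  choose F hF using hgap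
  -- the sequence of shifts
  obtain ⟨g, hg0, hgsucc⟩ : ∃ g : ℕ → ℕ, g 0 = 0 ∧ ∀ s, g (s + 1) = F (g s) + g s :=
    ⟨fun s => Nat.rec 0 (fun _ prev => F prev + prev) s, rfl, fun s => rfl⟩
  have hgmono : Monotone g := monotone_nat_of_le_succ fun s => by rw [hgsucc]; omega
  have hdiff : ∀ i j : ℕ, i < j →
      upperDensWith a (A ∩ shiftSet A (g j - g i)) ≤ δ ^ 2 / 2 := by
    intro i j hij
    obtain ⟨t, rfl⟩ : ∃ t, j = t + 1 := ⟨j - 1, by omega⟩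
    have hgi : g i ≤ g t := hgmono (by omega)
    have hgs := hgsucc t
    exact not_lt.mp (hF (g t) (g (t + 1) - g i) (by omega) (by omega))
  -- the number of shifts
  set r : ℕ := ⌈2 / δ⌉₊ with hr
  have hr2 : 2 ≤ (r : ℝ) * δ := by
    have h1 := Nat.le_ceil (2 / δ)
    rw [← hr] at h1
    rw [div_le_iff₀ hδ] at h1
    linarith
  have hr3 : (r : ℝ) * δ < 2 + δ := by
    have h1 := Nat.ceil_lt_add_one (show (0:ℝ) ≤ 2 / δ by positivity)
    rw [← hr] at h1
    have h2 : (r : ℝ) * δ < (2 / δ + 1) * δ := by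
      apply mul_lt_mul_of_pos_right h1 hδ
    rw [add_mul, div_mul_cancel₀] at h2
    · linarith
    · exact ne_of_gt hδ
  have hrnn : (0:ℝ) ≤ (r:ℝ) := Nat.cast_nonneg r
  -- the margin
  set m : ℝ := (r : ℝ) * δ - (((r:ℝ) * (r:ℝ) - (r:ℝ)) / 4) * δ ^ 2 - 1 with hm
  have hmpos : 0 < m := by
    rw [hm]
    nlinarith [mul_nonneg (show (0:ℝ) ≤ (r:ℝ)*δ - 2 by linarith)
      (show (0:ℝ) ≤ 2 + δ - (r:ℝ)*δ by linarith), hδ]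
  set kmax : ℕ := g r with hkmax
  set D : ℝ := (r:ℝ) * r + 2 * r * kmax + r + 1 with hD
  have hDpos : 0 < D := by positivity
  set ε : ℝ := m / D with hεdef
  have hεpos : 0 < ε := div_pos hmpos hDpos
  have hDε : D * ε = m := by
    rw [hεdef]; field_simp
  set Q : ℝ := ∑ j ∈ Finset.range (kmax + 1), a j with hQ
  have hQnn : 0 ≤ Q := Finset.sum_nonneg fun j _ => (hpos j).le
  -- the pair set
  set Fp : Finset (Fin r × Fin r) :=
    Finset.univ.filter (fun p : Fin r × Fin r => p.1 < p.2) with hFp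
  -- frequently
  have hfreq : ∃ᶠ M in Filter.atTop, δ < wSum a A M / P M :=
    Filter.frequently_lt_of_lt_limsup ((ratio_bddBelow hpos A).isCoboundedUnder_le) hA
  -- eventually facts
  have hev1 : ∀ᶠ M in Filter.atTop, ∀ p ∈ Fp,
      wSum a (A ∩ shiftSet A (g (p.2 : ℕ) - g (p.1 : ℕ))) M < (δ ^ 2 / 2 + ε) * P M := by
    rw [Filter.eventually_all_finset]
    intro p hp
    have hplt : (p.1 : ℕ) < (p.2 : ℕ) := by
      have := (Finset.mem_filter.mp hp).2
      exact this
    have hle := hdiff _ _ hplt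
    have hev := Filter.eventually_lt_of_limsup_lt
      (lt_of_le_of_lt hle (by linarith : δ ^ 2 / 2 < δ ^ 2 / 2 + ε))
      (ratio_bddAbove hpos _)
    filter_upwards [hev] with M hM
    rw [div_lt_iff₀ (hPpos M)] at hM
    exact hM
  have hPtop : Filter.Tendsto P Filter.atTop Filter.atTop := by
    apply Filter.tendsto_atTop_mono _ htop
    intro M
    exact Finset.single_le_sum (fun i _ => (hpos i).le)
      (Finset.mem_range.mpr (Nat.lt_succ_self M))
  have haP : Filter.Tendsto (fun M => a M / P M) Filter.atTop (nhds 0) := by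
    apply squeeze_zero (g := fun M => vSeq a (M + 1))
      (fun M => div_nonneg (hpos M).le (hPpos M).le)
    · intro M
      rw [show vSeq a (M + 1) = a (M + 1) / P M from rfl]
      exact (div_le_div_iff_of_pos_right (hPpos M)).mpr (hmono (Nat.le_succ M))
    · exact hv0.comp (Filter.tendsto_add_atTop_nat 1)
  have hev2 : ∀ᶠ M in Filter.atTop, a M < ε * P M := by
    filter_upwards [haP.eventually_lt_const hεpos] with M hM
    rw [div_lt_iff₀ (hPpos M)] at hM
    linarith [hM]
  have hev3 : ∀ᶠ M in Filter.atTop, Q < ε * P M := by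
    filter_upwards [hPtop.eventually_gt_atTop (Q / ε)] with M hM
    rw [div_lt_iff₀ hεpos] at hM
    linarith
  have hev4 : ∀ᶠ M in Filter.atTop, kmax ≤ M := Filter.eventually_ge_atTop kmax
  -- choose M
  obtain ⟨M, hM0, hM1, hM2, hM3, hM4⟩ :=
    (hfreq.and_eventually (hev1.and (hev2.and (hev3.and hev4)))).exists
  have hMwA : δ * P M < wSum a A M := by
    rw [lt_div_iff₀ (hPpos M)] at hM0
    linarith
  set N : ℕ := M - kmax with hN
  have hNM : N + kmax = M := Nat.sub_add_cancel hM4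
  have haMnn : 0 ≤ a M := (hpos M).le
  -- lower bound for each shifted set
  have hlow : ∀ i : Fin r,
      δ * P M - Q - 2 * (kmax:ℝ) * a M ≤ wSum a (shiftSet A (g (i:ℕ))) N := by
    intro i
    have hgik : g (i:ℕ) ≤ kmax := hgmono (le_of_lt i.isLt)
    have h1 := wSum_shift_ge hpos hmono A (g (i:ℕ)) N
    have hNgi : N + g (i:ℕ) ≤ M := by omega
    have h2 := wSum_drop hpos hmono A hNgi
    have h3 : ((M - (N + g (i:ℕ)) : ℕ) : ℝ) ≤ (kmax : ℝ) :=
      Nat.cast_le.mpr (by omega)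
    have h4 : ∑ j ∈ Finset.range (g (i:ℕ) + 1), a j ≤ Q := by
      rw [hQ]
      exact Finset.sum_le_sum_of_subset_of_nonneg
        (Finset.range_subset_range.mpr (by omega)) (fun j _ _ => (hpos j).le)
    have h5 : (g (i:ℕ) : ℝ) * a (N + g (i:ℕ)) ≤ (kmax : ℝ) * a M := by
      apply mul_le_mul (Nat.cast_le.mpr hgik) (hmono (by omega)) (hpos _).le
        (Nat.cast_nonneg _)
    have h6 : a (N + g (i:ℕ)) ≤ a M := hmono (by omega)
    have h7 : wSum a A (N + g (i:ℕ)) ≥ wSum a A M - (kmax:ℝ) * a M := by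
      nlinarith [h2, h3, haMnn]
    nlinarith [h1, h4, h5, hMwA]
  have hsum1 : (r : ℝ) * (δ * P M - Q - 2 * (kmax:ℝ) * a M)
      ≤ ∑ i : Fin r, wSum a (shiftSet A (g (i:ℕ))) N := by
    have := Finset.card_nsmul_le_sum Finset.univ
      (fun i : Fin r => wSum a (shiftSet A (g (i:ℕ))) N)
      (δ * P M - Q - 2 * (kmax:ℝ) * a M) (fun i _ => hlow i)
    simpa [Finset.card_univ, nsmul_eq_mul] using this
  -- upper bound for each pair
  have hpair : ∀ p ∈ Fp,
      wSum a (shiftSet A (g ((p.1 : Fin r) : ℕ)) ∩ shiftSet A (g ((p.2 : Fin r) : ℕ))) N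
        ≤ (δ ^ 2 / 2 + ε) * P M := by
    intro p hp
    have hplt : ((p.1 : Fin r) : ℕ) < ((p.2 : Fin r) : ℕ) := (Finset.mem_filter.mp hp).2
    have hgle : g ((p.1 : Fin r) : ℕ) ≤ g ((p.2 : Fin r) : ℕ) := hgmono hplt.le
    set d : ℕ := g ((p.2 : Fin r) : ℕ) - g ((p.1 : Fin r) : ℕ) with hd
    have hdadd : g ((p.1 : Fin r) : ℕ) + d = g ((p.2 : Fin r) : ℕ) := by omega
    have hBeq : shiftSet A (g ((p.1 : Fin r) : ℕ)) ∩ shiftSet A (g ((p.2 : Fin r) : ℕ))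
        = shiftSet (A ∩ shiftSet A d) (g ((p.1 : Fin r) : ℕ)) := by
      ext n
      simp only [shiftSet, Set.mem_inter_iff, Set.mem_setOf_eq]
      constructor
      · rintro ⟨h1, h2⟩
        exact ⟨h1, by rwa [show n + g ((p.1 : Fin r) : ℕ) + d
          = n + g ((p.2 : Fin r) : ℕ) by omega]⟩
      · rintro ⟨h1, h2⟩
        exact ⟨h1, by rwa [show n + g ((p.1 : Fin r) : ℕ) + d
          = n + g ((p.2 : Fin r) : ℕ) by omega] at h2⟩
    rw [hBeq]
    have hgik : g ((p.1 : Fin r) : ℕ) ≤ kmax := hgmono (le_of_lt (p.1).isLt)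
    calc wSum a (shiftSet (A ∩ shiftSet A d) (g ((p.1 : Fin r) : ℕ))) N
        ≤ wSum a (A ∩ shiftSet A d) (N + g ((p.1 : Fin r) : ℕ)) :=
          wSum_shift_le hpos hmono _ _ _
      _ ≤ wSum a (A ∩ shiftSet A d) M := wSum_mono_N hpos _ (by omega)
      _ ≤ (δ ^ 2 / 2 + ε) * P M := (hM1 p hp).le
  have hsum2 : ∑ p ∈ Fp,
      wSum a (shiftSet A (g ((p.1 : Fin r) : ℕ)) ∩ shiftSet A (g ((p.2 : Fin r) : ℕ))) N
        ≤ (Fp.card : ℝ) * ((δ ^ 2 / 2 + ε) * P M) := by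
    have := Finset.sum_le_card_nsmul Fp _ _ hpair
    simpa [nsmul_eq_mul] using this
  -- Bonferroni
  have hbonf := bonferroni hpos (fun i : Fin r => shiftSet A (g (i:ℕ))) N
  have hPNM : P N ≤ P M :=
    Finset.sum_le_sum_of_subset_of_nonneg (Finset.range_subset_range.mpr (by omega))
      (fun j _ _ => (hpos j).le)
  -- card of the pair set
  have hFc := pairs_card r
  have hrle : r ≤ r * r := Nat.le_mul_of_pos_left r (by
    rcases Nat.eq_zero_or_pos r with h | h
    · rw [h] at hr2; norm_num at hr2
    · exact h)
  have hFcR : (Fp.card : ℝ) ≤ ((r:ℝ) * r - r) / 2 := by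
    have h1 : ((2 * Fp.card : ℕ) : ℝ) = ((r * r - r : ℕ) : ℝ) := by
      rw [hFp] at *
      exact_mod_cast congrArg (Nat.cast (R := ℝ)) hFc
    rw [Nat.cast_sub hrle] at h1
    push_cast at h1
    linarith
  have hFcnn : (0:ℝ) ≤ (Fp.card : ℝ) := Nat.cast_nonneg _
  -- assemble
  have hstar : (r : ℝ) * (δ * P M - Q - 2 * (kmax:ℝ) * a M)
      - (Fp.card : ℝ) * ((δ ^ 2 / 2 + ε) * P M) ≤ P M := by
    have := hbonf
    linarith [hsum1, hsum2, hPNM, this]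
  have hPM := hPpos M
  have e1 : (r:ℝ) * Q ≤ (r:ℝ) * (ε * P M) :=
    mul_le_mul_of_nonneg_left hM3.le hrnn
  have e2 : (r:ℝ) * (2 * (kmax:ℝ) * a M) ≤ (r:ℝ) * (2 * (kmax:ℝ) * (ε * P M)) := by
    apply mul_le_mul_of_nonneg_left _ hrnn
    have : (0:ℝ) ≤ 2 * (kmax:ℝ) := by positivity
    exact mul_le_mul_of_nonneg_left hM2.le this
  have e3 : (Fp.card : ℝ) * ((δ ^ 2 / 2 + ε) * P M)
      ≤ (((r:ℝ) * r - r) / 2) * ((δ ^ 2 / 2 + ε) * P M) := by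
    apply mul_le_mul_of_nonneg_right hFcR
    positivity
  have big : (r:ℝ) * δ * P M - (r:ℝ) * (ε * P M) - (r:ℝ) * (2 * (kmax:ℝ) * (ε * P M))
      - (((r:ℝ) * r - r) / 2) * ((δ ^ 2 / 2 + ε) * P M) ≤ P M := by
    nlinarith [hstar, e1, e2, e3]
  -- rewrite using m
  have big2 : m * P M ≤ (((r:ℝ) + 2 * r * kmax + ((r:ℝ) * r - r) / 2) * ε) * P M := by
    rw [hm]
    nlinarith [big]
  have big3 : m ≤ ((r:ℝ) + 2 * r * kmax + ((r:ℝ) * r - r) / 2) * ε :=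
    le_of_mul_le_mul_right big2 hPM
  have big4 : ((r:ℝ) + 2 * r * kmax + ((r:ℝ) * r - r) / 2) * ε < D * ε := by
    apply mul_lt_mul_of_pos_right _ hεpos
    rw [hD]
    nlinarith [hrnn, Nat.cast_nonneg (α := ℝ) kmax, sq_nonneg ((r:ℝ))]
  rw [hDε] at big4
  linarith

end Main
/-- If `d̄_a(A) > δ > 0` with `a ∈ S`, then `{k : d̄_a(A ∩ (A - k)) > δ²/2}` has bounded gaps. -/
theorem stmt_13 (a : ℕ → ℝ) (ha : memS a) (δ : ℝ) (hδ : 0 < δ) (A : Set ℕ)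
    (hA : δ < upperDensWith a A) :
    Syndetic {k : ℕ | δ ^ 2 / 2 < upperDensWith a (A ∩ shiftSet A k)} := by
  exact stmt_13' a ha δ hδ A hA
end

section
/- Let B denote the class of positive sequences b = (b_n)_{n∈ℕ} that are non-increasing, tend to zero, and satisfy ∑_{n} b_n = +∞. If T is a bounded operator on a separable infinite-dimensional Banach space X which is U-frequently hypercyclic with respect to some b ∈ B, then for every n ≥ 1 the n-fold product T × ⋯ × T is U-frequently hypercyclic with respect to b. -/
open Filter Topology

/-- The class `B` of positive non-increasing sequences tending to `0` whose series diverges. -/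
def memB (b : ℕ → ℝ) : Prop :=
  (∀ n, 0 < b n) ∧ Antitone b ∧ Filter.Tendsto b Filter.atTop (nhds 0) ∧
    Filter.Tendsto (fun N => ∑ j ∈ Finset.range N, b j) Filter.atTop Filter.atTop


namespace UFAux

/-- Total weight of the initial segment `[0, N]`. -/
noncomputable def tot (b : ℕ → ℝ) (N : ℕ) : ℝ := ∑ j ∈ Finset.range (N + 1), b j

/-- `A` is `δ`-heavy: infinitely many `N` with `δ·tot N ≤ wSum A N`. -/
def hvy (b : ℕ → ℝ) (A : Set ℕ) (δ : ℝ) : Prop :=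
  ∀ N₀ : ℕ, ∃ N, N₀ ≤ N ∧ δ * tot b N ≤ wSum b A N

variable {b : ℕ → ℝ}

lemma tot_pos (hb : memB b) (N : ℕ) : 0 < tot b N :=
  Finset.sum_pos (fun i _ => hb.1 i) (Finset.nonempty_range_iff.mpr (Nat.succ_ne_zero N))

lemma tot_mono (hb : memB b) : Monotone (tot b) := fun M N h =>
  Finset.sum_le_sum_of_subset_of_nonneg
    (Finset.range_subset_range.mpr (by omega)) (fun i _ _ => (hb.1 i).le)

lemma tot_tendsto (hb : memB b) : Tendsto (tot b) atTop atTop := by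
  have h := hb.2.2.2.comp (tendsto_add_atTop_nat 1)
  exact h

lemma tot_large (hb : memB b) (C : ℝ) : ∃ N₁ : ℕ, ∀ N, N₁ ≤ N → C ≤ tot b N := by
  have := (tot_tendsto hb).eventually_ge_atTop C
  rcases eventually_atTop.mp this with ⟨N₁, hN₁⟩
  exact ⟨N₁, hN₁⟩

lemma wSum_nonneg (hb : memB b) (A : Set ℕ) (N : ℕ) : 0 ≤ wSum b A N :=
  Finset.sum_nonneg fun j _ => Set.indicator_nonneg (fun i _ => (hb.1 i).le) j

lemma wSum_le_tot (hb : memB b) (A : Set ℕ) (N : ℕ) : wSum b A N ≤ tot b N :=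
  Finset.sum_le_sum fun j _ => Set.indicator_le_self' (fun i _ => (hb.1 i).le) j

lemma wSum_mono_N (hb : memB b) (A : Set ℕ) {N M : ℕ} (h : N ≤ M) :
    wSum b A N ≤ wSum b A M :=
  Finset.sum_le_sum_of_subset_of_nonneg (Finset.range_subset_range.mpr (by omega))
    (fun j _ _ => Set.indicator_nonneg (fun i _ => (hb.1 i).le) j)

lemma wSum_mono_set (hb : memB b) {A B : Set ℕ} (h : A ⊆ B) (N : ℕ) :
    wSum b A N ≤ wSum b B N := by
  refine Finset.sum_le_sum fun j _ => ?_
  by_cases hj : j ∈ A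
  · rw [Set.indicator_of_mem hj, Set.indicator_of_mem (h hj)]
  · rw [Set.indicator_of_notMem hj]
    exact Set.indicator_nonneg (fun i _ => (hb.1 i).le) j

lemma prefix_le (hb : memB b) (s : ℕ) : ∑ j ∈ Finset.range s, b j ≤ s * b 0 := by
  calc ∑ j ∈ Finset.range s, b j ≤ ∑ _j ∈ Finset.range s, b 0 :=
        Finset.sum_le_sum fun j _ => hb.2.1 (Nat.zero_le j)
    _ = s * b 0 := by simp [mul_comm]

lemma tot_add_le (hb : memB b) (N s : ℕ) : tot b (N + s) ≤ tot b N + s * b 0 := by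
  have h1 : tot b (N + s) = tot b N + ∑ i ∈ Finset.range s, b (N + 1 + i) := by
    rw [tot, tot, show N + s + 1 = (N + 1) + s by omega, Finset.sum_range_add]
  have h2 : ∑ i ∈ Finset.range s, b (N + 1 + i) ≤ ∑ _i ∈ Finset.range s, b 0 :=
    Finset.sum_le_sum fun i _ => hb.2.1 (Nat.zero_le _)
  rw [h1]
  have : (∑ _i ∈ Finset.range s, b 0 : ℝ) = s * b 0 := by simp [mul_comm]
  linarith [h2, this ▸ h2]

/-- Left-shift lower bound: `wSum (A - s) N ≥ wSum A (N+s) - s·b₀`. -/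
lemma wSum_shiftSet_ge (hb : memB b) (A : Set ℕ) (s N : ℕ) :
    wSum b A (N + s) - s * b 0 ≤ wSum b (shiftSet A s) N := by
  have key : ∑ i ∈ Finset.range (N + 1), Set.indicator A b (s + i)
      ≤ wSum b (shiftSet A s) N := by
    refine Finset.sum_le_sum fun i _ => ?_
    by_cases hi : s + i ∈ A
    · have hi' : i ∈ shiftSet A s := by simpa [shiftSet, Nat.add_comm] using hi
      rw [Set.indicator_of_mem hi, Set.indicator_of_mem hi']
      exact hb.2.1 (by omega)
    · rw [Set.indicator_of_notMem hi]
      exact Set.indicator_nonneg (fun j _ => (hb.1 j).le) i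
  have split : wSum b A (N + s) = (∑ j ∈ Finset.range s, Set.indicator A b j)
      + ∑ i ∈ Finset.range (N + 1), Set.indicator A b (s + i) := by
    rw [wSum, show N + s + 1 = s + (N + 1) by omega, Finset.sum_range_add]
  have hpre : ∑ j ∈ Finset.range s, Set.indicator A b j ≤ s * b 0 := by
    calc ∑ j ∈ Finset.range s, Set.indicator A b j ≤ ∑ j ∈ Finset.range s, b j :=
          Finset.sum_le_sum fun j _ => Set.indicator_le_self' (fun i _ => (hb.1 i).le) j
      _ ≤ s * b 0 := prefix_le hb s
  linarith

/-- Right-shift upper bound: `wSum (A - s) N ≤ wSum A (N+s) + s·b₀`. -/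
lemma wSum_shiftSet_le (hb : memB b) (A : Set ℕ) (s N : ℕ) :
    wSum b (shiftSet A s) N ≤ wSum b A (N + s) + s * b 0 := by
  have key : wSum b (shiftSet A s) N ≤
      (∑ i ∈ Finset.range (N + 1), Set.indicator A b (s + i))
      + ∑ i ∈ Finset.range (N + 1), (b i - b (s + i)) := by
    rw [wSum, ← Finset.sum_add_distrib]
    refine Finset.sum_le_sum fun i _ => ?_
    by_cases hi : i ∈ shiftSet A s
    · have hi' : s + i ∈ A := by simpa [shiftSet, Nat.add_comm] using hi
      rw [Set.indicator_of_mem hi, Set.indicator_of_mem hi']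
      linarith []
    · rw [Set.indicator_of_notMem hi]
      have h1 : 0 ≤ Set.indicator A b (s + i) :=
        Set.indicator_nonneg (fun j _ => (hb.1 j).le) _
      have h2 : b (s + i) ≤ b i := hb.2.1 (by omega)
      linarith
  have h3 : ∑ i ∈ Finset.range (N + 1), Set.indicator A b (s + i) ≤ wSum b A (N + s) := by
    have split : wSum b A (N + s) = (∑ j ∈ Finset.range s, Set.indicator A b j)
        + ∑ i ∈ Finset.range (N + 1), Set.indicator A b (s + i) := by
      rw [wSum, show N + s + 1 = s + (N + 1) by omega, Finset.sum_range_add]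
    have : 0 ≤ ∑ j ∈ Finset.range s, Set.indicator A b j :=
      Finset.sum_nonneg fun j _ => Set.indicator_nonneg (fun i _ => (hb.1 i).le) j
    linarith
  have h4 : ∑ i ∈ Finset.range (N + 1), (b i - b (s + i)) ≤ s * b 0 := by
    have e1 : ∑ i ∈ Finset.range (N + 1), (b i - b (s + i))
        = tot b N - ∑ i ∈ Finset.range (N + 1), b (s + i) := by
      rw [Finset.sum_sub_distrib]; rfl
    have e2 : tot b (N + s) = (∑ j ∈ Finset.range s, b j)
        + ∑ i ∈ Finset.range (N + 1), b (s + i) := by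
      rw [tot, show N + s + 1 = s + (N + 1) by omega, Finset.sum_range_add]
    have e3 : tot b N ≤ tot b (N + s) := tot_mono hb (by omega)
    have e4 := prefix_le hb s
    linarith
  linarith

lemma hvy_mono_set {A B : Set ℕ} {δ : ℝ} (hb : memB b) (hAB : A ⊆ B)
    (h : hvy b A δ) : hvy b B δ := fun N₀ => by
  obtain ⟨N, hN, hle⟩ := h N₀
  exact ⟨N, hN, hle.trans (wSum_mono_set hb hAB N)⟩

lemma hvy_mono_delta {A : Set ℕ} {δ δ' : ℝ} (hb : memB b) (hδ : δ' ≤ δ)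
    (h : hvy b A δ) : hvy b A δ' := fun N₀ => by
  obtain ⟨N, hN, hle⟩ := h N₀
  exact ⟨N, hN, le_trans (by nlinarith [tot_pos hb N]) hle⟩

/-- Left shifts of heavy sets remain heavy (with halved constant). -/
lemma hvy_shift (hb : memB b) {A : Set ℕ} {δ : ℝ} (hδ : 0 < δ) (h : hvy b A δ) (s : ℕ) :
    hvy b (shiftSet A s) (δ / 2) := by
  intro N₀
  obtain ⟨N₁, hN₁⟩ := tot_large hb (2 * (s * b 0) / δ)
  obtain ⟨M, hM, hle⟩ := h (max (N₀ + s) (N₁ + s))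
  refine ⟨M - s, by omega, ?_⟩
  have hMs : (M - s) + s = M := by omega
  have h1 : wSum b A M - s * b 0 ≤ wSum b (shiftSet A s) (M - s) := by
    have := wSum_shiftSet_ge hb A s (M - s)
    rwa [hMs] at this
  have h2 : tot b (M - s) ≤ tot b M := tot_mono hb (by omega)
  have h3 : 2 * (s * b 0) / δ ≤ tot b (M - s) := hN₁ _ (by omega)
  have h4 : 2 * (s * b 0) ≤ δ * tot b (M - s) := by
    rw [div_le_iff₀ hδ] at h3; linarith
  nlinarith [tot_pos hb (M - s), tot_pos hb M]


lemma ratio_eq (A : Set ℕ) :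
    (fun N => wSum b A N / ∑ j ∈ Finset.range (N + 1), b j)
      = fun N => wSum b A N / tot b N := rfl

/-- From positive upper density extract a heaviness constant. -/
lemma hvy_of_pos (hb : memB b) {A : Set ℕ} (h : 0 < upperDensWith b A) :
    ∃ δ : ℝ, 0 < δ ∧ hvy b A δ := by
  refine ⟨upperDensWith b A / 2, by linarith, ?_⟩
  by_contra hcon
  rw [hvy] at hcon
  push_neg at hcon
  obtain ⟨N₀, hN₀⟩ := hcon
  have hev : ∀ᶠ N in (atTop : Filter ℕ),
      wSum b A N / tot b N ≤ upperDensWith b A / 2 := by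
    filter_upwards [eventually_ge_atTop N₀] with N hN
    have := hN₀ N hN
    rw [div_le_iff₀ (tot_pos hb N)]
    linarith [this.le, this]
  have hcb : IsCoboundedUnder (· ≤ ·) (atTop : Filter ℕ)
      (fun N => wSum b A N / tot b N) := by
    exact isCoboundedUnder_le_of_le _ (x := 0) fun N => div_nonneg (wSum_nonneg hb A N) (tot_pos hb N).le
  have : upperDensWith b A ≤ upperDensWith b A / 2 := by
    have := limsup_le_of_le hcb hev
    exact this
  linarith

/-- Heaviness gives positive upper density. -/
lemma pos_of_hvy (hb : memB b) {A : Set ℕ} {δ : ℝ} (hδ : 0 < δ) (h : hvy b A δ) :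
    0 < upperDensWith b A := by
  have hfreq : ∃ᶠ N in (atTop : Filter ℕ), δ ≤ wSum b A N / tot b N := by
    rw [frequently_atTop]
    intro N₀
    obtain ⟨N, hN, hle⟩ := h N₀
    refine ⟨N, hN, ?_⟩
    rw [le_div_iff₀ (tot_pos hb N)]
    linarith
  have hbd : IsBoundedUnder (· ≤ ·) (atTop : Filter ℕ)
      (fun N => wSum b A N / tot b N) := by
    refine ⟨1, Filter.eventually_map.2 (Eventually.of_forall fun N => ?_)⟩
    exact div_le_one_of_le₀ (wSum_le_tot hb A N) (tot_pos hb N).le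
  have : δ ≤ upperDensWith b A := by
    have := le_limsup_of_frequently_le hfreq hbd
    exact this
  linarith



lemma wSum_le_of_imp (hb : memB b) {A B : Set ℕ} {N : ℕ}
    (h : ∀ j, j ≤ N → j ∈ A → j ∈ B) : wSum b A N ≤ wSum b B N := by
  refine Finset.sum_le_sum fun j hj => ?_
  rw [Finset.mem_range] at hj
  by_cases hjA : j ∈ A
  · rw [Set.indicator_of_mem hjA, Set.indicator_of_mem (h j (by omega) hjA)]
  · rw [Set.indicator_of_notMem hjA]
    exact Set.indicator_nonneg (fun i _ => (hb.1 i).le) j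

lemma shift_inter (A : Set ℕ) {s s' : ℕ} (h : s ≤ s') :
    shiftSet A s ∩ shiftSet A s' = shiftSet (A ∩ shiftSet A (s' - s)) s := by
  ext n
  simp only [shiftSet, Set.mem_inter_iff, Set.mem_setOf_eq]
  constructor
  · rintro ⟨h1, h2⟩
    exact ⟨h1, by rwa [show n + s + (s' - s) = n + s' by omega]⟩
  · rintro ⟨h1, h2⟩
    rw [show n + s + (s' - s) = n + s' by omega] at h2
    exact ⟨h1, h2⟩

/-- characteristic function -/
noncomputable def chi (S : Set ℕ) : ℕ → ℝ := S.indicator (fun _ => 1)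

lemma chi_nonneg (S : Set ℕ) (j : ℕ) : 0 ≤ chi S j :=
  Set.indicator_nonneg (fun _ _ => zero_le_one) j

lemma indicator_eq_mul_chi (S : Set ℕ) (j : ℕ) :
    Set.indicator S b j = b j * chi S j := by
  unfold chi
  by_cases h : j ∈ S
  · rw [Set.indicator_of_mem h, Set.indicator_of_mem h, mul_one]
  · rw [Set.indicator_of_notMem h, Set.indicator_of_notMem h, mul_zero]

lemma chi_mul_chi (S S' : Set ℕ) (j : ℕ) :
    chi S j * chi S' j = chi (S ∩ S') j := by
  unfold chi
  by_cases h : j ∈ S <;> by_cases h' : j ∈ S'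
  · rw [Set.indicator_of_mem h, Set.indicator_of_mem h',
      Set.indicator_of_mem (Set.mem_inter h h'), mul_one]
  · rw [Set.indicator_of_notMem h', Set.indicator_of_notMem
      (fun hc : j ∈ S ∩ S' => h' hc.2), mul_zero]
  · rw [Set.indicator_of_notMem h, Set.indicator_of_notMem
      (fun hc : j ∈ S ∩ S' => h hc.1), zero_mul]
  · rw [Set.indicator_of_notMem h, Set.indicator_of_notMem
      (fun hc : j ∈ S ∩ S' => h hc.1), zero_mul]

set_option maxHeartbeats 1000000 in
/-- Weighted Khintchine recurrence: for a `θ`-heavy set `A`, the set of gaps `e` along which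
`A ∩ (A - e)` remains `θ²/16`-heavy is syndetic. -/
theorem khintchine (hb : memB b) {A : Set ℕ} {θ : ℝ} (hθ : 0 < θ) (hA : hvy b A θ) :
    Syndetic {e : ℕ | 1 ≤ e ∧ hvy b (A ∩ shiftSet A e) (θ ^ 2 / 16)} := by
  set β : ℝ := θ ^ 2 / 16 with hβ
  have hβpos : 0 < β := by positivity
  by_contra hsyn
  rw [Syndetic] at hsyn
  push_neg at hsyn
  have hsyn' : ∀ m : ℕ, ∃ n : ℕ, ∀ e, e ∈ Set.Icc n (n + m) →
      ¬(1 ≤ e ∧ hvy b (A ∩ shiftSet A e) β) := by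
    intro m
    obtain ⟨n, hn⟩ := hsyn m
    refine ⟨n, fun e he hK => ?_⟩
    have : e ∈ ({e : ℕ | 1 ≤ e ∧ hvy b (A ∩ shiftSet A e) β} ∩ Set.Icc n (n + m)) := ⟨hK, he⟩
    rw [hn] at this
    exact this
  choose g hg using hsyn'
  -- construct the translates
  set t : ℕ → ℕ := fun k => Nat.rec 0 (fun _ tk => g (tk + 1) + tk + 1) k with ht
  have htsucc : ∀ k, t (k + 1) = g (t k + 1) + t k + 1 := fun k => rfl
  have htmono : StrictMono t := by
    apply strictMono_nat_of_lt_succ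
    intro k
    rw [htsucc]
    omega
  have havoid : ∀ i j : ℕ, i < j →
      ¬(1 ≤ (t j - t i) ∧ hvy b (A ∩ shiftSet A (t j - t i)) β) := by
    intro i j hij
    obtain ⟨j', rfl⟩ : ∃ j', j = j' + 1 := ⟨j - 1, by omega⟩
    have hij' : i ≤ j' := by omega
    have hti : t i ≤ t j' := htmono.monotone hij'
    apply hg (t j' + 1)
    rw [htsucc]
    constructor
    · omega
    · omega
  -- thresholds for the pairs
  have hpair : ∀ i j : ℕ, ∃ N₀ : ℕ, i < j →
      ∀ N, N₀ ≤ N → wSum b (A ∩ shiftSet A (t j - t i)) N < β * tot b N := by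
    intro i j
    by_cases hij : i < j
    · have h1 : 1 ≤ t j - t i := by
        have := htmono hij; omega
      have := havoid i j hij
      rw [not_and] at this
      have h2 := this h1
      rw [hvy] at h2
      push_neg at h2
      obtain ⟨N₀, hN₀⟩ := h2
      exact ⟨N₀, fun _ N hN => by
        have := hN₀ N hN
        linarith [this]⟩
    · exact ⟨0, fun h => absurd h hij⟩
  choose Nf hNf using hpair
  -- the number of translates
  obtain ⟨rr, hrr⟩ := exists_nat_ge (2 / θ ^ 2)
  set r : ℕ := rr + 1 with hr
  have hrpos : 0 < r := Nat.succ_pos rr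
  have hrθ : 2 ≤ (r : ℝ) * θ ^ 2 := by
    have : (2 / θ ^ 2) * θ ^ 2 ≤ (r : ℝ) * θ ^ 2 := by
      apply mul_le_mul_of_nonneg_right _ (by positivity)
      calc (2 / θ ^ 2) ≤ (rr : ℝ) := hrr
        _ ≤ (r : ℝ) := by exact_mod_cast Nat.le_succ rr
    rwa [div_mul_cancel₀] at this
    positivity
  set Tmax : ℕ := t (r - 1) with hTmax
  have htle : ∀ i, i < r → t i ≤ Tmax := fun i hi => htmono.monotone (by omega)
  set c : ℝ := (Tmax : ℝ) * b 0 with hc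
  have hcnn : 0 ≤ c := mul_nonneg (Nat.cast_nonneg _) (hb.1 0).le
  -- uniform pair threshold
  set NN : ℕ := Finset.sup (Finset.range r ×ˢ Finset.range r) (fun p => Nf p.1 p.2) with hNN
  have hNNle : ∀ i j, i < r → j < r → Nf i j ≤ NN := by
    intro i j hi hj
    have hmem : (i, j) ∈ Finset.range r ×ˢ Finset.range r :=
      Finset.mem_product.mpr ⟨Finset.mem_range.mpr hi, Finset.mem_range.mpr hj⟩
    exact Finset.le_sup (f := fun p : ℕ × ℕ => Nf p.1 p.2) hmem
  -- tot threshold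
  obtain ⟨N₁, hN₁⟩ := tot_large hb (max (c / θ) ((4 * (β * c + c + 2 * θ * c)) / θ ^ 2))
  -- pick a good N
  obtain ⟨N, hNge, hNgood⟩ := hA (max NN N₁)
  set τ : ℝ := tot b N with hτ
  have hτpos : 0 < τ := tot_pos hb N
  have hτ1 : c / θ ≤ τ := le_trans (le_max_left _ _) (hN₁ N (by omega))
  have hτ2 : (4 * (β * c + c + 2 * θ * c)) / θ ^ 2 ≤ τ :=
    le_trans (le_max_right _ _) (hN₁ N (by omega))
  have hφnn : 0 ≤ θ * τ - c := by
    rw [div_le_iff₀ hθ] at hτ1; linarith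
  -- the sets S i
  set S : ℕ → Set ℕ := fun i => shiftSet A (t i) with hS
  -- lower bound for L
  set L : ℝ := ∑ i ∈ Finset.range r, wSum b (S i) N with hL
  have hLlow : (r : ℝ) * (θ * τ - c) ≤ L := by
    rw [hL]
    have : ∀ i ∈ Finset.range r, θ * τ - c ≤ wSum b (S i) N := by
      intro i hi
      have h1 := wSum_shiftSet_ge hb A (t i) N
      have h2 : wSum b A N ≤ wSum b A (N + t i) := wSum_mono_N hb A (by omega)
      have h3 : θ * τ ≤ wSum b A N := hNgood
      have h4 : (t i : ℝ) * b 0 ≤ c := by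
        rw [hc]
        apply mul_le_mul_of_nonneg_right _ (hb.1 0).le
        exact_mod_cast htle i (Finset.mem_range.mp hi)
      calc θ * τ - c ≤ wSum b A (N + t i) - (t i : ℝ) * b 0 := by linarith
        _ ≤ wSum b (S i) N := h1
    calc (r : ℝ) * (θ * τ - c) = ∑ _i ∈ Finset.range r, (θ * τ - c) := by
          rw [Finset.sum_const, Finset.card_range, nsmul_eq_mul]
      _ ≤ L := Finset.sum_le_sum this
  -- Cauchy-Schwarz
  set F : ℕ → ℝ := fun j => ∑ i ∈ Finset.range r, chi (S i) j with hF
  have hLsum : L = ∑ j ∈ Finset.range (N + 1), b j * F j := by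
    rw [hL]
    simp only [wSum]
    rw [Finset.sum_comm]
    refine Finset.sum_congr rfl fun j _ => ?_
    simp only [hF]
    rw [Finset.mul_sum]
    exact Finset.sum_congr rfl fun i _ => indicator_eq_mul_chi (S i) j
  set Q : ℝ := ∑ i ∈ Finset.range r, ∑ i' ∈ Finset.range r, wSum b (S i ∩ S i') N with hQ
  have hCS : L ^ 2 ≤ τ * Q := by
    have cs := Finset.sum_mul_sq_le_sq_mul_sq (Finset.range (N + 1))
      (fun j => Real.sqrt (b j)) (fun j => Real.sqrt (b j) * F j)
    have e1 : ∀ j, Real.sqrt (b j) * (Real.sqrt (b j) * F j) = b j * F j := by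
      intro j
      rw [← mul_assoc, Real.mul_self_sqrt (hb.1 j).le]
    have e2 : ∀ j, Real.sqrt (b j) ^ 2 = b j := fun j => Real.sq_sqrt (hb.1 j).le
    have e3 : ∀ j, (Real.sqrt (b j) * F j) ^ 2 = b j * F j ^ 2 := by
      intro j
      rw [mul_pow, e2]
    rw [show (∑ j ∈ Finset.range (N+1), Real.sqrt (b j) * (Real.sqrt (b j) * F j))
        = ∑ j ∈ Finset.range (N+1), b j * F j from Finset.sum_congr rfl fun j _ => e1 j] at cs
    rw [show (∑ j ∈ Finset.range (N+1), Real.sqrt (b j) ^ 2)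
        = tot b N from Finset.sum_congr rfl fun j _ => e2 j] at cs
    rw [show (∑ j ∈ Finset.range (N+1), (Real.sqrt (b j) * F j) ^ 2)
        = ∑ j ∈ Finset.range (N+1), b j * F j ^ 2 from Finset.sum_congr rfl fun j _ => e3 j] at cs
    have hQeq : ∑ j ∈ Finset.range (N + 1), b j * F j ^ 2 = Q := by
      rw [hQ]
      have expand : ∀ j, b j * F j ^ 2
          = ∑ i ∈ Finset.range r, ∑ i' ∈ Finset.range r,
            Set.indicator (S i ∩ S i') b j := by
        intro j
        simp only [hF]
        rw [sq, Finset.sum_mul_sum, Finset.mul_sum]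
        refine Finset.sum_congr rfl fun i _ => ?_
        rw [Finset.mul_sum]
        refine Finset.sum_congr rfl fun i' _ => ?_
        rw [← mul_assoc]
        rw [show b j * chi (S i) j * chi (S i') j = b j * (chi (S i) j * chi (S i') j) from
          by ring, chi_mul_chi, ← indicator_eq_mul_chi]
      rw [Finset.sum_congr rfl fun j _ => expand j]
      rw [Finset.sum_comm]
      refine Finset.sum_congr rfl fun i _ => ?_
      rw [Finset.sum_comm]
      exact Finset.sum_congr rfl fun i' _ => rfl
    rw [hQeq] at cs
    rw [hLsum]
    exact cs
  -- bound Q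
  have hQbound : Q ≤ (r : ℝ) * τ + (r : ℝ) ^ 2 * (β * (τ + c) + c) := by
    have hterm : ∀ i i', i < r → i' < r →
        wSum b (S i ∩ S i') N ≤ (if i = i' then τ else 0) + (β * (τ + c) + c) := by
      intro i i' hi hi'
      by_cases heq : i = i'
      · rw [if_pos heq]
        have h1 : wSum b (S i ∩ S i') N ≤ tot b N := wSum_le_tot hb _ N
        have h2 : 0 ≤ β * (τ + c) + c := by positivity
        linarith
      · rw [if_neg heq]
        -- wlog i < i'
        have key : ∀ a a' : ℕ, a < r → a' < r → a < a' →
            wSum b (S a ∩ S a') N ≤ β * (τ + c) + c := by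
          intro a a' ha ha' haa
          have hta : t a ≤ t a' := (htmono haa).le
          rw [hS]
          rw [shift_inter A hta]
          have h1 := wSum_shiftSet_le hb (A ∩ shiftSet A (t a' - t a)) (t a) N
          have h2 : wSum b (A ∩ shiftSet A (t a' - t a)) (N + t a) < β * tot b (N + t a) := by
            apply hNf a a' haa
            have := hNNle a a' ha ha'
            omega
          have h3 : tot b (N + t a) ≤ τ + (t a : ℝ) * b 0 := tot_add_le hb N (t a)
          have h4 : (t a : ℝ) * b 0 ≤ c := by
            rw [hc]
            apply mul_le_mul_of_nonneg_right _ (hb.1 0).le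
            exact_mod_cast htle a ha
          nlinarith [hβpos.le]
        rcases lt_or_gt_of_ne heq with hlt | hgt
        · have h0 : (0:ℝ) ≤ 0 := le_refl 0
          have := key i i' hi hi' hlt
          linarith
        · have := key i' i hi' hi hgt
          rw [Set.inter_comm] at this
          linarith
    calc Q ≤ ∑ i ∈ Finset.range r, ∑ i' ∈ Finset.range r,
          ((if i = i' then τ else 0) + (β * (τ + c) + c)) := by
          rw [hQ]
          apply Finset.sum_le_sum
          intro i hi
          apply Finset.sum_le_sum
          intro i' hi'
          exact hterm i i' (Finset.mem_range.mp hi) (Finset.mem_range.mp hi')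
      _ = (r : ℝ) * τ + (r : ℝ) ^ 2 * (β * (τ + c) + c) := by
          rw [Finset.sum_congr rfl fun i _ => Finset.sum_add_distrib]
          rw [Finset.sum_add_distrib]
          have e1 : (∑ i ∈ Finset.range r, ∑ i' ∈ Finset.range r,
              (if i = i' then τ else 0 : ℝ)) = (r : ℝ) * τ := by
            have hdiag : ∀ i ∈ Finset.range r,
                (∑ i' ∈ Finset.range r, (if i = i' then τ else 0 : ℝ)) = τ := by
              intro i hi
              rw [Finset.sum_ite_eq (Finset.range r) i (fun _ => τ)]
              exact if_pos hi
            rw [Finset.sum_congr rfl hdiag, Finset.sum_const, Finset.card_range, nsmul_eq_mul]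
          have e2 : (∑ _i ∈ Finset.range r, ∑ _i' ∈ Finset.range r,
              (β * (τ + c) + c)) = (r : ℝ) ^ 2 * (β * (τ + c) + c) := by
            simp only [Finset.sum_const, Finset.card_range, nsmul_eq_mul]
            ring
          rw [e1, e2]
  -- final contradiction
  have hmain : (r : ℝ) ^ 2 * (θ * τ - c) ^ 2 ≤ τ * ((r : ℝ) * τ + (r : ℝ) ^ 2 * (β * (τ + c) + c)) := by
    have h1 : ((r : ℝ) * (θ * τ - c)) ^ 2 ≤ L ^ 2 := by
      apply sq_le_sq'
      · nlinarith [hLlow, hφnn, Nat.cast_nonneg (α := ℝ) r]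
      · exact hLlow
    calc (r : ℝ) ^ 2 * (θ * τ - c) ^ 2 = ((r : ℝ) * (θ * τ - c)) ^ 2 := by ring
      _ ≤ L ^ 2 := h1
      _ ≤ τ * Q := hCS
      _ ≤ τ * ((r : ℝ) * τ + (r : ℝ) ^ 2 * (β * (τ + c) + c)) := by
          apply mul_le_mul_of_nonneg_left hQbound hτpos.le
  -- now derive the contradiction by arithmetic
  have hrR : (0:ℝ) < (r : ℝ) := by exact_mod_cast hrpos
  have hτ2' : 4 * (β * c + c + 2 * θ * c) ≤ θ ^ 2 * τ := by
    rw [div_le_iff₀ (by positivity : (0:ℝ) < θ ^ 2)] at hτ2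
    linarith
  -- r τ² ≤ r² θ² τ²/2
  have hA1 : (r : ℝ) * τ ^ 2 ≤ (r : ℝ) ^ 2 * θ ^ 2 * τ ^ 2 / 2 := by
    have h0 : (2:ℝ) * ((r:ℝ) * τ ^ 2) ≤ ((r:ℝ) * θ ^ 2) * ((r:ℝ) * τ ^ 2) := by
      apply mul_le_mul_of_nonneg_right hrθ (by positivity)
    nlinarith [h0]
  have hA2 : (r : ℝ) ^ 2 * (β * c + c + 2 * θ * c) * τ ≤ (r:ℝ) ^ 2 * θ ^ 2 * τ ^ 2 / 4 := by
    have h0 := mul_le_mul_of_nonneg_right hτ2' (le_of_lt hτpos)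
    have h4 : (0:ℝ) ≤ (r:ℝ) ^ 2 / 4 := by positivity
    have h5 := mul_le_mul_of_nonneg_left h0 h4
    nlinarith [h5]
  have hβτ : (r:ℝ) ^ 2 * β * τ ^ 2 = (r:ℝ) ^ 2 * θ ^ 2 * τ ^ 2 / 16 := by
    rw [hβ]; ring
  have hXpos : (0:ℝ) < (r:ℝ) ^ 2 * θ ^ 2 * τ ^ 2 := by positivity
  nlinarith [hmain, hA1, hA2, hβτ, hXpos, sq_nonneg ((r:ℝ) * c)]


/-- Heavy sets have unbounded elements. -/
lemma hvy_unbounded (hb : memB b) {A : Set ℕ} {δ : ℝ} (hδ : 0 < δ) (h : hvy b A δ)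
    (k : ℕ) : ∃ m, k ≤ m ∧ m ∈ A := by
  by_contra hc
  push_neg at hc
  obtain ⟨N₁, hN₁⟩ := tot_large hb ((∑ j ∈ Finset.range k, b j) / δ + 1)
  obtain ⟨N, hN, hle⟩ := h N₁
  have hbound : wSum b A N ≤ ∑ j ∈ Finset.range k, b j := by
    rw [wSum]
    calc ∑ j ∈ Finset.range (N + 1), Set.indicator A b j
        = ∑ j ∈ (Finset.range (N + 1)).filter (· < k), Set.indicator A b j := by
          symm
          apply Finset.sum_filter_of_ne
          intro j _ hne
          by_contra hjk
          push_neg at hjk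
          have hj : j ∉ A := hc j (by omega)
          exact hne (Set.indicator_of_notMem hj b)
      _ ≤ ∑ j ∈ Finset.range k, Set.indicator A b j := by
          apply Finset.sum_le_sum_of_subset_of_nonneg
          · intro j hj
            rw [Finset.mem_filter] at hj
            exact Finset.mem_range.mpr hj.2
          · intro j _ _
            exact Set.indicator_nonneg (fun i _ => (hb.1 i).le) j
      _ ≤ ∑ j ∈ Finset.range k, b j :=
          Finset.sum_le_sum fun j _ => Set.indicator_le_self' (fun i _ => (hb.1 i).le) j
  have h1 : (∑ j ∈ Finset.range k, b j) / δ + 1 ≤ tot b N := hN₁ N hN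
  have h2 : (∑ j ∈ Finset.range k, b j) + δ ≤ δ * tot b N := by
    rw [div_add' _ _ _ (ne_of_gt hδ)] at h1
    rw [div_le_iff₀ hδ] at h1
    linarith [h1]
  linarith

/-- Heavy sets are nonempty. -/
lemma hvy_nonempty (hb : memB b) {A : Set ℕ} {δ : ℝ} (hδ : 0 < δ) (h : hvy b A δ) :
    A.Nonempty := by
  obtain ⟨m, _, hm⟩ := hvy_unbounded hb hδ h 0
  exact ⟨m, hm⟩

/-- Shifted-syndetic lemma. -/
lemma syndetic_shift_mixed {E : Set ℕ} (hE : Syndetic E) (p q : ℕ) :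
    Syndetic {t : ℕ | ∃ e ∈ E, t + p = e + q} := by
  obtain ⟨m, hm⟩ := hE
  refine ⟨m + q, fun n => ?_⟩
  obtain ⟨e, heE, heIcc⟩ := hm (n + p)
  rw [Set.mem_Icc] at heIcc
  refine ⟨e + q - p, ⟨e, heE, by omega⟩, ?_⟩
  rw [Set.mem_Icc]
  omega

section Dyn

variable {X : Type*} [NormedAddCommGroup X] [NormedSpace ℂ X]

variable (T : X →L[ℂ] X)

lemma pow_add_apply (a c : ℕ) (v : X) : (T ^ (a + c)) v = (T ^ a) ((T ^ c) v) := by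
  rw [pow_add]; rfl

/-- A uniform bound for the operator norms `‖T^t‖`, `t ≤ K`. -/
noncomputable def Cpow (K : ℕ) : ℝ := 1 + ∑ t ∈ Finset.range (K + 1), ‖T ^ t‖

lemma Cpow_pos (K : ℕ) : 0 < Cpow T K := by
  have : (0:ℝ) ≤ ∑ t ∈ Finset.range (K + 1), ‖T ^ t‖ :=
    Finset.sum_nonneg fun t _ => norm_nonneg _
  rw [Cpow]; linarith

lemma one_le_Cpow (K : ℕ) : 1 ≤ Cpow T K := by
  have : (0:ℝ) ≤ ∑ t ∈ Finset.range (K + 1), ‖T ^ t‖ :=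
    Finset.sum_nonneg fun t _ => norm_nonneg _
  rw [Cpow]; linarith

lemma norm_pow_le_Cpow {t K : ℕ} (h : t ≤ K) : ‖T ^ t‖ ≤ Cpow T K := by
  have h1 : ‖T ^ t‖ ≤ ∑ u ∈ Finset.range (K + 1), ‖T ^ u‖ :=
    Finset.single_le_sum (fun u _ => norm_nonneg (T ^ u))
      (Finset.mem_range.mpr (by omega))
  rw [Cpow]; linarith

lemma dist_pow_le (a : ℕ) (v w : X) :
    dist ((T ^ a) v) ((T ^ a) w) ≤ ‖T ^ a‖ * dist v w := by
  rw [dist_eq_norm, dist_eq_norm, ← map_sub]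
  exact (T ^ a).le_opNorm _

lemma norm_pow_apply_le (a : ℕ) (v : X) : ‖(T ^ a) v‖ ≤ ‖T ^ a‖ * ‖v‖ :=
  (T ^ a).le_opNorm v

variable {T}

variable {x : X}

/-- Orbit visits beyond any time (tail density of the orbit). -/
lemma orbit_hits (hb : memB b) (hx : x ∈ UFHCaSet b T) {U : Set X} (hU : IsOpen U)
    (hne : U.Nonempty) (k : ℕ) : ∃ m, k ≤ m ∧ (T ^ m) x ∈ U := by
  obtain ⟨δ, hδ, h⟩ := hvy_of_pos hb (hx U hU hne)
  obtain ⟨m, hm, hmem⟩ := hvy_unbounded hb hδ h k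
  exact ⟨m, hm, hmem⟩

set_option maxHeartbeats 1600000 in
/-- **Thickness of transition sets**: for nonempty open `P`, `Q` the set of times `t` with
`T^t(P) ∩ Q ≠ ∅` contains arbitrarily long intervals, arbitrarily far out. -/
lemma thick_NSet (hb : memB b) (hx : x ∈ UFHCaSet b T) {P Q : Set X}
    (hP : IsOpen P) (hPne : P.Nonempty) (hQ : IsOpen Q) (hQne : Q.Nonempty) (L M : ℕ) :
    ∃ t, M ≤ t ∧ ∀ s, s ≤ L → ∃ y ∈ P, (T ^ (t + s)) y ∈ Q := by
  -- interior balls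
  obtain ⟨p₀, hp₀⟩ := hPne
  obtain ⟨ε₁', hε₁', hballP⟩ := Metric.isOpen_iff.mp hP p₀ hp₀
  set ε₁ : ℝ := ε₁' / 2 with hε₁def
  have hε₁ : 0 < ε₁ := by positivity
  have hballP' : Metric.ball p₀ (2 * ε₁) ⊆ P := by
    rw [show 2 * ε₁ = ε₁' by rw [hε₁def]; ring]
    exact hballP
  obtain ⟨v₀, hv₀⟩ := hQne
  obtain ⟨ε₄', hε₄', hballQ⟩ := Metric.isOpen_iff.mp hQ v₀ hv₀
  set ε₄ : ℝ := ε₄' / 2 with hε₄def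
  have hε₄ : 0 < ε₄ := by positivity
  have hballQ' : Metric.ball v₀ (2 * ε₄) ⊆ Q := by
    rw [show 2 * ε₄ = ε₄' by rw [hε₄def]; ring]
    exact hballQ
  set CL : ℝ := Cpow T L with hCL
  have hCLpos : 0 < CL := Cpow_pos T L
  -- a₀ : hit near p₀
  obtain ⟨a₀, -, ha₀⟩ := orbit_hits hb hx Metric.isOpen_ball
    ⟨p₀, Metric.mem_ball_self (by positivity : (0:ℝ) < ε₁ / 2)⟩ 0
  -- o₀ : hit near 0
  obtain ⟨o₀, -, ho₀⟩ := orbit_hits hb hx Metric.isOpen_ball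
    ⟨(0 : X), Metric.mem_ball_self (by positivity : (0:ℝ) < ε₄ / (2 * CL))⟩ 0
  -- the recurrence accuracy
  set η : ℝ := min (ε₁ / (2 * (‖T ^ a₀‖ + 1))) (ε₄ / (2 * CL * (‖T ^ o₀‖ + 1))) with hη
  have hηpos : 0 < η := by
    apply lt_min
    · have : (0:ℝ) < ‖T ^ a₀‖ + 1 := by positivity
      positivity
    · have : (0:ℝ) < ‖T ^ o₀‖ + 1 := by positivity
      positivity
  -- the recurrence set
  obtain ⟨δ', hδ', hA'⟩ := hvy_of_pos hb
    (hx (Metric.ball x η) Metric.isOpen_ball ⟨x, Metric.mem_ball_self hηpos⟩)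
  have hsyn := khintchine hb hδ' hA'
  -- the syndetic set of valid times
  have hT : Syndetic {t : ℕ | ∃ e ∈ {e : ℕ | 1 ≤ e ∧
      hvy b (retSet T x (Metric.ball x η) ∩ shiftSet (retSet T x (Metric.ball x η)) e)
        (δ' ^ 2 / 16)}, t + a₀ = e + o₀} := syndetic_shift_mixed hsyn a₀ o₀
  obtain ⟨m₁, hm₁⟩ := hT
  -- length of zero run
  set L₂ : ℕ := L + m₁ with hL₂
  set CL₂ : ℝ := Cpow T L₂ with hCL₂
  have hCL₂pos : 0 < CL₂ := Cpow_pos T L₂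
  -- zero run start
  obtain ⟨j₀, -, hj₀⟩ := orbit_hits hb hx Metric.isOpen_ball
    ⟨(0 : X), Metric.mem_ball_self (by positivity : (0:ℝ) < ε₁ / CL₂)⟩ 0
  -- late visit to Q-ball
  obtain ⟨mstar, hmstar_ge, hmstar⟩ := orbit_hits hb hx Metric.isOpen_ball
    ⟨v₀, Metric.mem_ball_self hε₄⟩ (M + j₀ + L₂ + a₀)
  -- pick t in the syndetic set within the right window
  obtain ⟨t, htT, htIcc⟩ := hm₁ (mstar - j₀ - L₂)
  rw [Set.mem_Icc] at htIcc
  obtain ⟨e, ⟨he1, heH⟩, hte⟩ := htT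
  have htwin : mstar - j₀ - L₂ ≤ t ∧ t ≤ mstar - j₀ - L := by
    constructor
    · exact htIcc.1
    · have := htIcc.2
      omega
  -- the recurrence pair
  obtain ⟨α, hαA, hαeA⟩ : ∃ α, α ∈ retSet T x (Metric.ball x η) ∧
      α + e ∈ retSet T x (Metric.ball x η) := by
    obtain ⟨α, hα⟩ := hvy_nonempty hb (by positivity) heH
    exact ⟨α, hα.1, hα.2⟩
  refine ⟨t, by omega, ?_⟩
  intro s hs
  -- the witness
  set y : X := (T ^ (a₀ + α)) x with hy
  set js : ℕ := mstar - t - s with hjs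
  have hts_le : t + s ≤ mstar - j₀ := by omega
  have hjs_ge : j₀ ≤ js := by omega
  have hjs_le : js ≤ j₀ + L₂ := by omega
  have hjsm : t + s + js = mstar := by omega
  set w : X := (T ^ js) x with hw
  refine ⟨y + w, ?_, ?_⟩
  · -- y + w ∈ P
    apply hballP'
    rw [Metric.mem_ball]
    have hyd : dist y p₀ < ε₁ := by
      have h1 : dist y ((T ^ a₀) x) ≤ ‖T ^ a₀‖ * dist ((T ^ α) x) x := by
        rw [hy, pow_add_apply]
        exact dist_pow_le T a₀ _ _
      have h2 : dist ((T ^ α) x) x < η := by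
        have := hαA
        rw [retSet, Set.mem_setOf_eq, Metric.mem_ball] at this
        exact this
      have h3 : ‖T ^ a₀‖ * dist ((T ^ α) x) x ≤ (‖T ^ a₀‖ + 1) * η := by
        apply mul_le_mul (by linarith) h2.le dist_nonneg (by positivity)
      have h4 : (‖T ^ a₀‖ + 1) * η ≤ ε₁ / 2 := by
        have : η ≤ ε₁ / (2 * (‖T ^ a₀‖ + 1)) := min_le_left _ _
        rw [le_div_iff₀ (by positivity : (0:ℝ) < 2 * (‖T ^ a₀‖ + 1))] at this
        nlinarith [this]
      have h5 : dist ((T ^ a₀) x) p₀ < ε₁ / 2 := by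
        rw [Metric.mem_ball] at ha₀
        exact ha₀
      calc dist y p₀ ≤ dist y ((T ^ a₀) x) + dist ((T ^ a₀) x) p₀ := dist_triangle _ _ _
        _ < ε₁ / 2 + ε₁ / 2 := by
            apply add_lt_add_of_le_of_lt _ h5
            linarith
        _ = ε₁ := by ring
    have hwd : ‖w‖ < ε₁ := by
      have hdecomp : w = (T ^ (js - j₀)) ((T ^ j₀) x) := by
        rw [hw, ← pow_add_apply, show js - j₀ + j₀ = js by omega]
      have h1 : ‖w‖ ≤ ‖T ^ (js - j₀)‖ * ‖(T ^ j₀) x‖ := by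
        rw [hdecomp]; exact norm_pow_apply_le T _ _
      have h2 : ‖T ^ (js - j₀)‖ ≤ CL₂ := norm_pow_le_Cpow T (by omega)
      have h3 : ‖(T ^ j₀) x‖ < ε₁ / CL₂ := by
        rw [Metric.mem_ball, dist_zero_right] at hj₀
        exact hj₀
      calc ‖w‖ ≤ CL₂ * ‖(T ^ j₀) x‖ := by
            apply h1.trans
            apply mul_le_mul_of_nonneg_right h2 (norm_nonneg _)
        _ < CL₂ * (ε₁ / CL₂) := by
            apply mul_lt_mul_of_pos_left h3 hCL₂pos
        _ = ε₁ := by field_simp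
    calc dist (y + w) p₀ ≤ dist y p₀ + ‖w‖ := by
          rw [dist_eq_norm, dist_eq_norm]
          calc ‖y + w - p₀‖ = ‖(y - p₀) + w‖ := by congr 1; abel
            _ ≤ ‖y - p₀‖ + ‖w‖ := norm_add_le _ _
      _ < ε₁ + ε₁ := add_lt_add hyd hwd
      _ = 2 * ε₁ := by ring
  · -- T^(t+s) (y + w) ∈ Q
    apply hballQ'
    rw [Metric.mem_ball]
    rw [map_add]
    have hTw : (T ^ (t + s)) w = (T ^ mstar) x := by
      rw [hw, ← pow_add_apply, hjsm]
    have hTy : ‖(T ^ (t + s)) y‖ < ε₄ := by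
      have hnum : t + s + (a₀ + α) = s + (o₀ + (α + e)) := by omega
      have hexp : (T ^ (t + s)) y = (T ^ s) ((T ^ o₀) ((T ^ (α + e)) x)) := by
        calc (T ^ (t + s)) y = (T ^ (t + s + (a₀ + α))) x := by rw [hy, ← pow_add_apply]
          _ = (T ^ (s + (o₀ + (α + e)))) x := by rw [hnum]
          _ = (T ^ s) ((T ^ (o₀ + (α + e))) x) := pow_add_apply T s _ x
          _ = (T ^ s) ((T ^ o₀) ((T ^ (α + e)) x)) := by rw [pow_add_apply]
      have h1 : dist ((T ^ o₀) ((T ^ (α + e)) x)) ((T ^ o₀) x)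
          ≤ ‖T ^ o₀‖ * dist ((T ^ (α + e)) x) x := dist_pow_le T o₀ _ _
      have h2 : dist ((T ^ (α + e)) x) x < η := by
        have := hαeA
        rw [retSet, Set.mem_setOf_eq, Metric.mem_ball] at this
        exact this
      have h3 : ‖(T ^ o₀) x‖ < ε₄ / (2 * CL) := by
        rw [Metric.mem_ball, dist_zero_right] at ho₀
        exact ho₀
      have h4 : ‖(T ^ o₀) ((T ^ (α + e)) x)‖ < ε₄ / CL := by
        have h5 : ‖T ^ o₀‖ * dist ((T ^ (α + e)) x) x ≤ (‖T ^ o₀‖ + 1) * η := by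
          apply mul_le_mul (by linarith) h2.le dist_nonneg (by positivity)
        have h6 : (‖T ^ o₀‖ + 1) * η ≤ ε₄ / (2 * CL) := by
          have : η ≤ ε₄ / (2 * CL * (‖T ^ o₀‖ + 1)) := min_le_right _ _
          rw [le_div_iff₀ (by positivity : (0:ℝ) < 2 * CL * (‖T ^ o₀‖ + 1))] at this
          rw [le_div_iff₀ (by positivity : (0:ℝ) < 2 * CL)]
          nlinarith [this]
        calc ‖(T ^ o₀) ((T ^ (α + e)) x)‖
            ≤ ‖(T ^ o₀) x‖ + dist ((T ^ o₀) ((T ^ (α + e)) x)) ((T ^ o₀) x) := by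
              rw [dist_eq_norm]
              calc ‖(T ^ o₀) ((T ^ (α + e)) x)‖
                  = ‖(T ^ o₀) x + ((T ^ o₀) ((T ^ (α + e)) x) - (T ^ o₀) x)‖ := by
                    congr 1; abel
                _ ≤ ‖(T ^ o₀) x‖ + ‖(T ^ o₀) ((T ^ (α + e)) x) - (T ^ o₀) x‖ :=
                    norm_add_le _ _
          _ < ε₄ / (2 * CL) + ε₄ / (2 * CL) := by
              apply add_lt_add_of_lt_of_le h3
              linarith
          _ = ε₄ / CL := by field_simp; ring
      rw [hexp]
      have h7 : ‖(T ^ s) ((T ^ o₀) ((T ^ (α + e)) x))‖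
          ≤ ‖T ^ s‖ * ‖(T ^ o₀) ((T ^ (α + e)) x)‖ := norm_pow_apply_le T _ _
      have h8 : ‖T ^ s‖ ≤ CL := norm_pow_le_Cpow T hs
      calc ‖(T ^ s) ((T ^ o₀) ((T ^ (α + e)) x))‖
          ≤ CL * ‖(T ^ o₀) ((T ^ (α + e)) x)‖ := by
            apply h7.trans
            apply mul_le_mul_of_nonneg_right h8 (norm_nonneg _)
        _ < CL * (ε₄ / CL) := mul_lt_mul_of_pos_left h4 hCLpos
        _ = ε₄ := by field_simp
    have hTwd : dist ((T ^ mstar) x) v₀ < ε₄ := by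
      rw [Metric.mem_ball] at hmstar
      exact hmstar
    calc dist ((T ^ (t + s)) y + (T ^ (t + s)) w) v₀
        ≤ ‖(T ^ (t + s)) y‖ + dist ((T ^ (t + s)) w) v₀ := by
          rw [dist_eq_norm, dist_eq_norm]
          calc ‖(T ^ (t + s)) y + (T ^ (t + s)) w - v₀‖
              = ‖(T ^ (t + s)) y + ((T ^ (t + s)) w - v₀)‖ := by congr 1; abel
            _ ≤ ‖(T ^ (t + s)) y‖ + ‖(T ^ (t + s)) w - v₀‖ := norm_add_le _ _
      _ < ε₄ + ε₄ := by
          apply add_lt_add hTy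
          rw [hTw]
          exact hTwd
      _ = 2 * ε₄ := by ring


/-- Iterated Khintchine constants. -/
noncomputable def phi (θ : ℝ) : ℕ → ℝ
  | 0 => θ
  | (k+1) => (phi θ k) ^ 2 / 16

lemma phi_pos {θ : ℝ} (hθ : 0 < θ) (k : ℕ) : 0 < phi θ k := by
  induction k with
  | zero => exact hθ
  | succ k ih => rw [phi]; positivity

/-- The chain construction: good gaps with a nonempty open target chain. -/
lemma chain (hb : memB b) (hx : x ∈ UFHCaSet b T) {A : Set ℕ} {θ : ℝ}
    (hθ : 0 < θ) (hA : hvy b A θ) (q : ℕ → ℕ) (u : ℕ → X) {ρ : ℝ} (hρ : 0 < ρ) :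
    ∀ k : ℕ, ∃ (A' : Set ℕ) (e : ℕ → ℕ) (Ξ : Set X),
      hvy b A' (phi θ k) ∧ A' ⊆ A ∧ (∀ i, i < k → ∀ α ∈ A', α + e i ∈ A) ∧
      IsOpen Ξ ∧ Ξ.Nonempty ∧
      (∀ i, i < k → ∀ z ∈ Ξ, (T ^ (q i + e i)) z ∈ Metric.ball (u i) ρ) := by
  intro k
  induction k with
  | zero =>
    exact ⟨A, fun _ => 0, Set.univ, hA, le_refl A, fun i hi => absurd hi (Nat.not_lt_zero i),
      isOpen_univ, ⟨x, trivial⟩, fun i hi => absurd hi (Nat.not_lt_zero i)⟩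
  | succ k ih =>
    obtain ⟨A', e, Ξ, hA', hA'A, hAe, hΞo, hΞne, hΞprop⟩ := ih
    -- Khintchine on A'
    obtain ⟨mk, hmk⟩ := khintchine hb (phi_pos hθ k) hA'
    -- thickness
    obtain ⟨t, htq, hts⟩ := thick_NSet hb hx hΞo hΞne Metric.isOpen_ball
      ⟨u k, Metric.mem_ball_self hρ⟩ mk (q k)
    -- pick e_k in the window
    obtain ⟨ek, hekE, hekIcc⟩ := hmk (t - q k)
    rw [Set.mem_Icc] at hekIcc
    obtain ⟨hek1, hekH⟩ := hekE
    have hwin : t ≤ q k + ek ∧ q k + ek ≤ t + mk := by omega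
    obtain ⟨y, hyΞ, hyball⟩ := hts (q k + ek - t) (by omega)
    rw [show t + (q k + ek - t) = q k + ek by omega] at hyball
    -- assemble
    refine ⟨A' ∩ shiftSet A' ek, Function.update e k ek,
      Ξ ∩ (⇑(T ^ (q k + ek))) ⁻¹' (Metric.ball (u k) ρ), ?_, ?_, ?_, ?_, ?_, ?_⟩
    · rw [phi]; exact hekH
    · exact fun α hα => hA'A hα.1
    · intro i hi α hα
      rcases Nat.lt_or_ge i k with hik | hik
      · rw [Function.update_of_ne (by omega)]
        exact hAe i hik α hα.1
      · have hik' : i = k := by omega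
        subst hik'
        rw [Function.update_self]
        exact hA'A hα.2
    · exact hΞo.inter ((Metric.isOpen_ball).preimage (T ^ (q k + ek)).continuous)
    · exact ⟨y, hyΞ, hyball⟩
    · intro i hi z hz
      rcases Nat.lt_or_ge i k with hik | hik
      · rw [Function.update_of_ne (by omega)]
        exact hΞprop i hik z hz.1
      · have hik' : i = k := by omega
        subst hik'
        rw [Function.update_self]
        exact hz.2

/-- Per-coordinate evaluation of powers of the diagonal product operator. -/
lemma nfold_pow_apply {n : ℕ} (T : X →L[ℂ] X) (m : ℕ) (y : Fin n → X) (i : Fin n) :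
    ((nfold T n ^ m) y) i = (T ^ m) (y i) := by
  induction m generalizing y with
  | zero => simp
  | succ m ih =>
    rw [pow_succ, pow_succ]
    have h1 : ((nfold T n ^ m * nfold T n) y) = (nfold T n ^ m) (nfold T n y) := rfl
    have h2 : ((T ^ m * T) (y i)) = (T ^ m) (T (y i)) := rfl
    rw [h1, h2, ih (nfold T n y)]
    congr 1

/-- **Key density lemma**: for each product ball target there is a uniform heaviness constant
`δ` such that arbitrarily near any tuple `u` there is an orbit-tuple whose product return times
into the target are `δ`-heavy. -/
lemma key_density (hb : memB b) (hx : x ∈ UFHCaSet b T) {n : ℕ}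
    (w : Fin n → X) {r : ℝ} (hr : 0 < r) :
    ∃ δ : ℝ, 0 < δ ∧ ∀ (u : Fin n → X) (ρ : ℝ), 0 < ρ →
      ∃ m : Fin n → ℕ, (∀ i, (T ^ (m i)) x ∈ Metric.ball (u i) ρ) ∧
        hvy b {j : ℕ | ∀ i, (T ^ (j + m i)) x ∈ Metric.ball (w i) r} δ := by
  -- anchor times
  have hq : ∀ i : Fin n, ∃ m, 0 ≤ m ∧ (T ^ m) x ∈ Metric.ball (w i) (r / 2) := fun i =>
    orbit_hits hb hx Metric.isOpen_ball ⟨w i, Metric.mem_ball_self (by positivity)⟩ 0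
  choose q _ hq2 using hq
  -- uniform operator bound
  set Cq : ℝ := 1 + ∑ i : Fin n, ‖T ^ q i‖ with hCq
  have hCqpos : 0 < Cq := by
    have : (0:ℝ) ≤ ∑ i : Fin n, ‖T ^ q i‖ := Finset.sum_nonneg fun i _ => norm_nonneg _
    rw [hCq]; linarith
  have hCqle : ∀ i : Fin n, ‖T ^ q i‖ ≤ Cq := by
    intro i
    have h1 : ‖T ^ q i‖ ≤ ∑ j : Fin n, ‖T ^ q j‖ :=
      Finset.single_le_sum (fun j _ => norm_nonneg (T ^ q j)) (Finset.mem_univ i)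
    rw [hCq]; linarith
  -- accuracy
  set η : ℝ := (r / 2) / Cq with hη
  have hηpos : 0 < η := by positivity
  -- the recurrence set
  obtain ⟨θ, hθ, hA⟩ := hvy_of_pos hb
    (hx (Metric.ball x η) Metric.isOpen_ball ⟨x, Metric.mem_ball_self hηpos⟩)
  refine ⟨phi θ n / 2, by have := phi_pos hθ n; linarith, ?_⟩
  intro u ρ hρ
  -- extend to ℕ-indexed data
  set qe : ℕ → ℕ := fun j => if h : j < n then q ⟨j, h⟩ else 0 with hqe
  set ue : ℕ → X := fun j => if h : j < n then u ⟨j, h⟩ else x with hue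
  obtain ⟨A', e, Ξ, hA', hA'sub, hAe, hΞo, hΞne, hΞprop⟩ :=
    chain hb hx hθ hA qe ue hρ n
  -- the common offset
  obtain ⟨σ, -, hσ⟩ := orbit_hits hb hx hΞo hΞne 0
  refine ⟨fun i => σ + qe i.val + e i.val, ?_, ?_⟩
  · intro i
    have h1 : (T ^ (σ + qe i.val + e i.val)) x
        = (T ^ (qe i.val + e i.val)) ((T ^ σ) x) := by
      rw [show σ + qe i.val + e i.val = (qe i.val + e i.val) + σ by ring, pow_add_apply]
    rw [h1]
    have h2 := hΞprop i.val i.isLt ((T ^ σ) x) hσ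
    have h3 : ue i.val = u i := by rw [hue]; simp [i.isLt]
    rwa [h3] at h2
  · apply hvy_mono_set hb (B := {j : ℕ | ∀ i : Fin n,
      (T ^ (j + (σ + qe i.val + e i.val))) x ∈ Metric.ball (w i) r})
      (A := shiftSet A' σ)
    · intro j hj
      rw [Set.mem_setOf_eq]
      intro i
      have hjσ : j + σ ∈ A' := hj
      have hmem : (j + σ) + e i.val ∈ retSet T x (Metric.ball x η) :=
        hAe i.val i.isLt (j + σ) hjσ
      have hexp : (T ^ (j + (σ + qe i.val + e i.val))) x
          = (T ^ qe i.val) ((T ^ ((j + σ) + e i.val)) x) := by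
        have hnum : j + (σ + qe i.val + e i.val) = qe i.val + ((j + σ) + e i.val) := by ring
        rw [hnum, pow_add_apply]
      rw [hexp]
      have hqi : qe i.val = q i := by rw [hqe]; simp [i.isLt]
      rw [hqi]
      have hd1 : dist ((T ^ q i) ((T ^ ((j + σ) + e i.val)) x)) ((T ^ q i) x)
          ≤ ‖T ^ q i‖ * dist ((T ^ ((j + σ) + e i.val)) x) x := dist_pow_le T (q i) _ _
      have hd2 : dist ((T ^ ((j + σ) + e i.val)) x) x < η := by
        have := hmem
        rw [retSet, Set.mem_setOf_eq, Metric.mem_ball] at this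
        exact this
      have hd3 : ‖T ^ q i‖ * dist ((T ^ ((j + σ) + e i.val)) x) x ≤ Cq * η := by
        apply mul_le_mul (hCqle i) hd2.le dist_nonneg hCqpos.le
      have hd4 : Cq * η = r / 2 := by
        rw [hη]; field_simp
      have hd5 : dist ((T ^ q i) x) (w i) < r / 2 := by
        have := hq2 i
        rwa [Metric.mem_ball] at this
      rw [Metric.mem_ball]
      calc dist ((T ^ q i) ((T ^ (j + σ + e i.val)) x)) (w i)
          ≤ dist ((T ^ q i) ((T ^ (j + σ + e i.val)) x)) ((T ^ q i) x)
            + dist ((T ^ q i) x) (w i) := dist_triangle _ _ _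
        _ < r / 2 + r / 2 := by
            apply add_lt_add_of_le_of_lt _ hd5
            calc dist ((T ^ q i) ((T ^ (j + σ + e i.val)) x)) ((T ^ q i) x)
                ≤ ‖T ^ q i‖ * dist ((T ^ (j + σ + e i.val)) x) x := hd1
              _ ≤ Cq * η := hd3
              _ = r / 2 := hd4
        _ = r := by ring
    · exact hvy_shift hb (phi_pos hθ n) hA' σ


/-- Openness of the approximation sets. -/
lemma G_isOpen (hb : memB b) {Z : Type*} [NormedAddCommGroup Z] [NormedSpace ℂ Z]
    (S : Z →L[ℂ] Z) {U : Set Z} (hU : IsOpen U) (c : ℝ) (N₀ : ℕ) :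
    IsOpen {y : Z | ∃ N, N₀ ≤ N ∧ c * tot b N ≤ wSum b (retSet S y U) N} := by
  classical
  rw [isOpen_iff_mem_nhds]
  rintro y ⟨N, hN, hle⟩
  have hV : IsOpen (⋂ j ∈ Finset.range (N + 1),
      (if j ∈ retSet S y U then (⇑(S ^ j)) ⁻¹' U else Set.univ)) := by
    apply isOpen_biInter_finset
    intro j _
    split
    · exact hU.preimage (S ^ j).continuous
    · exact isOpen_univ
  rw [mem_nhds_iff]
  refine ⟨_, ?_, hV, ?_⟩
  · intro y' hy'
    refine ⟨N, hN, hle.trans (wSum_le_of_imp hb ?_)⟩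
    intro j hj hjy
    have hj' := Set.mem_iInter₂.mp hy' j (Finset.mem_range.mpr (by omega))
    rw [if_pos hjy] at hj'
    exact hj'
  · apply Set.mem_iInter₂.mpr
    intro j _
    split
    · next h => exact h
    · trivial

set_option maxHeartbeats 1000000 in
/-- The core theorem: products of `UFHC_b` operators are `UFHC_b`. -/
theorem main_product (hb : memB b) [CompleteSpace X] [TopologicalSpace.SeparableSpace X]
    (hx : x ∈ UFHCaSet b T) (n : ℕ) :
    (UFHCaSet b (nfold T n)).Nonempty := by
  classical
  obtain ⟨D, hDc, hDd⟩ := TopologicalSpace.exists_countable_dense (Fin n → X)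
  haveI := hDc.to_subtype
  have hkey : ∀ p : ↥D × ℕ, ∃ δ : ℝ, 0 < δ ∧ ∀ (u : Fin n → X) (ρ : ℝ), 0 < ρ →
      ∃ m : Fin n → ℕ, (∀ i, (T ^ (m i)) x ∈ Metric.ball (u i) ρ) ∧
        hvy b {j : ℕ | ∀ i, (T ^ (j + m i)) x ∈
          Metric.ball ((p.1 : Fin n → X) i) (1 / ((p.2 : ℝ) + 1))} δ := by
    intro p
    exact key_density hb hx (p.1 : Fin n → X) (by positivity)
  choose δf hδfpos hδf using hkey
  set G : (↥D × ℕ) × ℕ → Set (Fin n → X) := fun pq =>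
    {y | ∃ N, pq.2 ≤ N ∧ δf pq.1 * tot b N ≤
      wSum b (retSet (nfold T n) y
        (Metric.ball ((pq.1.1 : Fin n → X)) (1 / ((pq.1.2 : ℝ) + 1)))) N} with hG
  have hGopen : ∀ pq, IsOpen (G pq) := by
    intro pq
    exact G_isOpen hb (nfold T n) Metric.isOpen_ball (δf pq.1) pq.2
  have hGdense : ∀ pq, Dense (G pq) := by
    rintro ⟨⟨d, k⟩, N₀⟩
    rw [Metric.dense_iff]
    intro y₀ ρ hρ
    obtain ⟨m, hm1, hm2⟩ := hδf (d, k) y₀ ρ hρ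
    refine ⟨fun i => (T ^ (m i)) x, ?_, ?_⟩
    · rw [Metric.mem_ball]
      rw [dist_pi_lt_iff hρ]
      intro i
      have := hm1 i
      rwa [Metric.mem_ball] at this
    · obtain ⟨N, hN, hle⟩ := hm2 N₀
      refine ⟨N, hN, hle.trans ?_⟩
      have hsub : {j : ℕ | ∀ i, (T ^ (j + m i)) x ∈
          Metric.ball ((d : Fin n → X) i) (1 / ((k : ℝ) + 1))} ⊆
          retSet (nfold T n) (fun i => (T ^ (m i)) x)
            (Metric.ball ((d : Fin n → X)) (1 / ((k : ℝ) + 1))) := by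
        intro j hj
        rw [retSet, Set.mem_setOf_eq, Metric.mem_ball,
          dist_pi_lt_iff (by positivity : (0:ℝ) < 1 / ((k : ℝ) + 1))]
        intro i
        have h1 : ((nfold T n ^ j) fun i' => (T ^ (m i')) x) i
            = (T ^ (j + m i)) x := by
          rw [nfold_pow_apply, ← pow_add_apply]
        rw [h1]
        have := hj i
        rwa [Metric.mem_ball] at this
      have := hvy_mono_set hb hsub (fun N₀' => hm2 N₀')
      obtain ⟨N', hN', hle'⟩ := this N
      -- we need the bound at N itself; redo directly
      exact wSum_le_of_imp hb fun j _ hj => hsub hj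
  have hBaire : Dense (⋂ pq, G pq) := dense_iInter_of_isOpen hGopen hGdense
  obtain ⟨y, hy⟩ := hBaire.nonempty
  refine ⟨y, ?_⟩
  intro U hU hUne
  obtain ⟨u, hu⟩ := hUne
  obtain ⟨ε, hε, hball⟩ := Metric.isOpen_iff.mp hU u hu
  obtain ⟨k, hk⟩ := exists_nat_gt (2 / ε)
  have hrk : (0:ℝ) < 1 / ((k : ℝ) + 1) := by positivity
  obtain ⟨d, hdD, hdball⟩ := hDd.exists_mem_open Metric.isOpen_ball
    ⟨u, Metric.mem_ball_self hrk⟩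
  have h2k : 2 / ((k : ℝ) + 1) < ε := by
    rw [div_lt_iff₀ (by positivity : (0:ℝ) < (k : ℝ) + 1)]
    rw [div_lt_iff₀ hε] at hk
    nlinarith [hε, hk]
  have hsub : Metric.ball (d : Fin n → X) (1 / ((k : ℝ) + 1)) ⊆ U := by
    intro z hz
    apply hball
    rw [Metric.mem_ball] at hz hdball ⊢
    calc dist z u ≤ dist z d + dist d u := dist_triangle _ _ _
      _ < 1 / ((k : ℝ) + 1) + 1 / ((k : ℝ) + 1) := add_lt_add hz hdball
      _ = 2 / ((k : ℝ) + 1) := by ring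
      _ < ε := h2k
  have hvyU : hvy b (retSet (nfold T n) y U) (δf (⟨d, hdD⟩, k)) := by
    intro N₀
    have hmem := Set.mem_iInter.mp hy ((⟨d, hdD⟩, k), N₀)
    obtain ⟨N, hN, hle⟩ := hmem
    refine ⟨N, hN, hle.trans ?_⟩
    apply wSum_le_of_imp hb
    intro j _ hj
    exact hsub hj
  exact pos_of_hvy hb (hδfpos _) hvyU


end Dyn
end UFAux

/-- If `T` is `U`-frequently hypercyclic with respect to some `b ∈ B`, then every `n`-fold
product `T × ⋯ × T` (`n ≥ 1`) is `U`-frequently hypercyclic with respect to `b`. -/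
theorem stmt_15 (b : ℕ → ℝ) (hb : memB b)
    {X : Type*} [NormedAddCommGroup X] [NormedSpace ℂ X] [CompleteSpace X]
    [TopologicalSpace.SeparableSpace X] (hX : ¬FiniteDimensional ℂ X) (T : X →L[ℂ] X)
    (hT : (UFHCaSet b T).Nonempty) (n : ℕ) (hn : 1 ≤ n) :
    (UFHCaSet b (nfold T n)).Nonempty := by
  obtain ⟨x, hx⟩ := hT
  exact UFAux.main_product hb hx n
end

section
/- Let a = (a_n)_{n∈ℕ} and b = (b_n)_{n∈ℕ} be positive sequences with ∑_n a_n = ∑_n b_n = +∞, and assume that the sequence (a_n/b_n)_{n∈ℕ} is eventually decreasing to zero. Then for every subset A ⊆ ℕ, d_b(A) ≤ d_a(A) ≤ d̄_a(A) ≤ d̄_b(A), where d and d̄ denote the lower and upper weighted densities respectively. -/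
open Filter Topology

private lemma le_of_eps {x y : ℝ} (h : ∀ ε : ℝ, 0 < ε → x ≤ y + ε) : x ≤ y := by
  by_contra hc
  push_neg at hc
  have := h ((x - y) / 2) (by linarith)
  linarith

private lemma abel_bound (c g h : ℕ → ℝ) (N₀ M : ℕ) (hM : N₀ ≤ M)
    (hcpos : ∀ n, 0 < c n) (hcdec : ∀ m n, N₀ ≤ m → m ≤ n → c n ≤ c m)
    (hFG : ∀ N, M ≤ N → ∑ j ∈ Finset.range (N+1), g j ≤ ∑ j ∈ Finset.range (N+1), h j) :
    ∃ C : ℝ, ∀ N, M ≤ N →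
      ∑ j ∈ Finset.range (N+1), c j * g j ≤ (∑ j ∈ Finset.range (N+1), c j * h j) + C := by
  set d : ℕ → ℝ := fun j => g j - h j with hd
  set P : ℕ → ℝ := fun i => ∑ j ∈ Finset.range (i+1), d j with hP
  have hPle : ∀ i, M ≤ i → P i ≤ 0 := by
    intro i hi
    have := hFG i hi
    simp only [hP, hd, Finset.sum_sub_distrib]
    linarith
  refine ⟨∑ i ∈ Finset.range M, (c i - c (i+1)) * P i, fun N hN => ?_⟩
  have key : ∑ j ∈ Finset.range (N+1), c j * d j
      = c N * P N + ∑ i ∈ Finset.range N, (c i - c (i+1)) * P i := by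
    have h1 := Finset.sum_range_by_parts c d (N+1)
    simp only [smul_eq_mul, Nat.add_sub_cancel] at h1
    rw [h1, sub_eq_add_neg, ← Finset.sum_neg_distrib]
    congr 1
    exact Finset.sum_congr rfl fun i _ => by simp only [hP]; ring
  have hterm1 : c N * P N ≤ 0 :=
    mul_nonpos_of_nonneg_of_nonpos (hcpos N).le (hPle N hN)
  have hsplit : ∑ i ∈ Finset.range N, (c i - c (i+1)) * P i
      = ∑ i ∈ Finset.range M, (c i - c (i+1)) * P i
        + ∑ i ∈ Finset.Ico M N, (c i - c (i+1)) * P i := by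
    rw [Finset.range_eq_Ico, ← Finset.sum_Ico_consecutive _ (Nat.zero_le M) hN, ← Finset.range_eq_Ico]
  have htail : ∑ i ∈ Finset.Ico M N, (c i - c (i+1)) * P i ≤ 0 := by
    apply Finset.sum_nonpos
    intro i hi
    rw [Finset.mem_Ico] at hi
    exact mul_nonpos_of_nonneg_of_nonpos
      (sub_nonneg.2 (hcdec i (i+1) (le_trans hM hi.1) (Nat.le_succ i))) (hPle i hi.1)
  have hsum : ∑ j ∈ Finset.range (N+1), c j * d j
      = ∑ j ∈ Finset.range (N+1), c j * g j - ∑ j ∈ Finset.range (N+1), c j * h j := by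
    simp only [hd, mul_sub, Finset.sum_sub_distrib]
  linarith

private lemma wSum_nonneg_s17 (w : ℕ → ℝ) (hw : ∀ n, 0 < w n) (A : Set ℕ) (N : ℕ) :
    0 ≤ wSum w A N :=
  Finset.sum_nonneg fun j _ => Set.indicator_nonneg (fun i _ => (hw i).le) j

private lemma wSum_le (w : ℕ → ℝ) (hw : ∀ n, 0 < w n) (A : Set ℕ) (N : ℕ) :
    wSum w A N ≤ ∑ j ∈ Finset.range (N+1), w j :=
  Finset.sum_le_sum fun j _ => Set.indicator_le_self' (fun i _ => (hw i).le) j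

private lemma sum_pos' (w : ℕ → ℝ) (hw : ∀ n, 0 < w n) (N : ℕ) :
    0 < ∑ j ∈ Finset.range (N+1), w j :=
  Finset.sum_pos (fun j _ => hw j) Finset.nonempty_range_add_one

private lemma q_mem (w : ℕ → ℝ) (hw : ∀ n, 0 < w n) (A : Set ℕ) (N : ℕ) :
    0 ≤ wSum w A N / ∑ j ∈ Finset.range (N+1), w j ∧
      wSum w A N / ∑ j ∈ Finset.range (N+1), w j ≤ 1 :=
  ⟨div_nonneg (wSum_nonneg_s17 w hw A N) (sum_pos' w hw N).le,
   (div_le_one (sum_pos' w hw N)).2 (wSum_le w hw A N)⟩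

private lemma q_bddAbove (w : ℕ → ℝ) (hw : ∀ n, 0 < w n) (A : Set ℕ) :
    Filter.IsBoundedUnder (· ≤ ·) Filter.atTop
      (fun N => wSum w A N / ∑ j ∈ Finset.range (N+1), w j) :=
  Filter.isBoundedUnder_of ⟨1, fun N => (q_mem w hw A N).2⟩

private lemma q_bddBelow (w : ℕ → ℝ) (hw : ∀ n, 0 < w n) (A : Set ℕ) :
    Filter.IsBoundedUnder (· ≥ ·) Filter.atTop
      (fun N => wSum w A N / ∑ j ∈ Finset.range (N+1), w j) :=
  Filter.isBoundedUnder_of ⟨0, fun N => (q_mem w hw A N).1⟩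

private lemma wSum_a_eq (a b : ℕ → ℝ) (hbpos : ∀ n, 0 < b n) (A : Set ℕ) (N : ℕ) :
    wSum a A N = ∑ j ∈ Finset.range (N+1), (a j / b j) * Set.indicator A b j := by
  unfold wSum
  refine Finset.sum_congr rfl fun j _ => ?_
  by_cases hj : j ∈ A
  · simp [Set.indicator_of_mem hj, div_mul_cancel₀ _ (hbpos j).ne']
  · simp [Set.indicator_of_notMem hj]

private lemma sum_a_eq (a b : ℕ → ℝ) (hbpos : ∀ n, 0 < b n) (u : ℝ) (N : ℕ) :
    ∑ j ∈ Finset.range (N+1), (a j / b j) * (u * b j)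
      = u * ∑ j ∈ Finset.range (N+1), a j := by
  rw [Finset.mul_sum]
  refine Finset.sum_congr rfl fun j _ => ?_
  rw [show a j / b j * (u * b j) = u * (b j / b j * a j) by ring, div_self (hbpos j).ne',
    one_mul]

private lemma sumA_tendsto (a : ℕ → ℝ)
    (hasum : Filter.Tendsto (fun N => ∑ j ∈ Finset.range N, a j) Filter.atTop Filter.atTop) :
    Filter.Tendsto (fun N => ∑ j ∈ Finset.range (N+1), a j) Filter.atTop Filter.atTop :=
  hasum.comp (Filter.tendsto_add_atTop_nat 1)

private lemma limsup_le_aux (a b : ℕ → ℝ) (hapos : ∀ n, 0 < a n) (hbpos : ∀ n, 0 < b n)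
    (hasum : Filter.Tendsto (fun N => ∑ j ∈ Finset.range N, a j) Filter.atTop Filter.atTop)
    (N₀ : ℕ) (hdec : ∀ m n : ℕ, N₀ ≤ m → m ≤ n → a n / b n ≤ a m / b m)
    (A : Set ℕ) (u : ℝ) (M : ℕ) (hM : N₀ ≤ M)
    (hub : ∀ N, M ≤ N → wSum b A N ≤ u * ∑ j ∈ Finset.range (N+1), b j) :
    upperDensWith a A ≤ u := by
  obtain ⟨C, hC⟩ := abel_bound (fun n => a n / b n) (Set.indicator A b) (fun j => u * b j)
    N₀ M hM (fun n => div_pos (hapos n) (hbpos n)) hdec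
    (fun N hN => by simpa [wSum, Finset.mul_sum] using hub N hN)
  have hmain : ∀ N, M ≤ N →
      wSum a A N ≤ u * (∑ j ∈ Finset.range (N+1), a j) + C := by
    intro N hN
    have := hC N hN
    rw [← wSum_a_eq a b hbpos A N, sum_a_eq a b hbpos u N] at this
    exact this
  apply le_of_eps
  intro ε hε
  have htend : Filter.Tendsto (fun N => C / ∑ j ∈ Finset.range (N+1), a j)
      Filter.atTop (nhds 0) :=
    Filter.Tendsto.div_atTop tendsto_const_nhds (sumA_tendsto a hasum)
  have hev : ∀ᶠ N in Filter.atTop,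
      wSum a A N / (∑ j ∈ Finset.range (N+1), a j) ≤ u + ε := by
    have h1 : ∀ᶠ N in Filter.atTop, C / ∑ j ∈ Finset.range (N+1), a j < ε :=
      htend.eventually (gt_mem_nhds hε)
    filter_upwards [h1, Filter.eventually_ge_atTop M] with N h1 h2
    have hApos := sum_pos' a hapos N
    have hCle : C ≤ ε * ∑ j ∈ Finset.range (N+1), a j := by
      rw [div_lt_iff₀ hApos] at h1
      linarith
    rw [div_le_iff₀ hApos]
    have := hmain N h2
    nlinarith
  exact Filter.limsup_le_of_le ((q_bddBelow a hapos A).isCoboundedUnder_le) hev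

private lemma le_liminf_aux (a b : ℕ → ℝ) (hapos : ∀ n, 0 < a n) (hbpos : ∀ n, 0 < b n)
    (hasum : Filter.Tendsto (fun N => ∑ j ∈ Finset.range N, a j) Filter.atTop Filter.atTop)
    (N₀ : ℕ) (hdec : ∀ m n : ℕ, N₀ ≤ m → m ≤ n → a n / b n ≤ a m / b m)
    (A : Set ℕ) (u : ℝ) (M : ℕ) (hM : N₀ ≤ M)
    (hub : ∀ N, M ≤ N → u * (∑ j ∈ Finset.range (N+1), b j) ≤ wSum b A N) :
    u ≤ lowerDensWith a A := by
  obtain ⟨C, hC⟩ := abel_bound (fun n => a n / b n) (fun j => u * b j) (Set.indicator A b)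
    N₀ M hM (fun n => div_pos (hapos n) (hbpos n)) hdec
    (fun N hN => by simpa [wSum, Finset.mul_sum] using hub N hN)
  have hmain : ∀ N, M ≤ N →
      u * (∑ j ∈ Finset.range (N+1), a j) ≤ wSum a A N + C := by
    intro N hN
    have := hC N hN
    rw [← wSum_a_eq a b hbpos A N, sum_a_eq a b hbpos u N] at this
    exact this
  have hgoal : ∀ ε : ℝ, 0 < ε → u - ε ≤ lowerDensWith a A := by
    intro ε hε
    have htend : Filter.Tendsto (fun N => C / ∑ j ∈ Finset.range (N+1), a j)
        Filter.atTop (nhds 0) :=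
      Filter.Tendsto.div_atTop tendsto_const_nhds (sumA_tendsto a hasum)
    have hev : ∀ᶠ N in Filter.atTop,
        u - ε ≤ wSum a A N / (∑ j ∈ Finset.range (N+1), a j) := by
      have h1 : ∀ᶠ N in Filter.atTop, C / ∑ j ∈ Finset.range (N+1), a j < ε :=
        htend.eventually (gt_mem_nhds hε)
      filter_upwards [h1, Filter.eventually_ge_atTop M] with N h1 h2
      have hApos := sum_pos' a hapos N
      have hCle : C ≤ ε * ∑ j ∈ Finset.range (N+1), a j := by
        rw [div_lt_iff₀ hApos] at h1
        linarith
      rw [le_div_iff₀ hApos]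
      have := hmain N h2
      nlinarith
    exact Filter.le_liminf_of_le ((q_bddAbove a hapos A).isCoboundedUnder_ge) hev
  apply le_of_eps
  intro ε hε
  have := hgoal ε hε
  linarith

/-- If `(a_n/b_n)` is eventually decreasing to zero then
`d_b(A) ≤ d_a(A) ≤ d̄_a(A) ≤ d̄_b(A)` for every `A ⊆ ℕ`. -/
theorem stmt_17 (a b : ℕ → ℝ) (hapos : ∀ n, 0 < a n) (hbpos : ∀ n, 0 < b n)
    (hasum : Filter.Tendsto (fun N => ∑ j ∈ Finset.range N, a j) Filter.atTop Filter.atTop)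
    (hbsum : Filter.Tendsto (fun N => ∑ j ∈ Finset.range N, b j) Filter.atTop Filter.atTop)
    (hdec : ∃ N₀ : ℕ, ∀ m n : ℕ, N₀ ≤ m → m ≤ n → a n / b n ≤ a m / b m)
    (hzero : Filter.Tendsto (fun n => a n / b n) Filter.atTop (nhds 0))
    (A : Set ℕ) :
    lowerDensWith b A ≤ lowerDensWith a A ∧
      lowerDensWith a A ≤ upperDensWith a A ∧
      upperDensWith a A ≤ upperDensWith b A := by
  obtain ⟨N₀, hdec⟩ := hdec
  have hmid : lowerDensWith a A ≤ upperDensWith a A :=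
    Filter.liminf_le_limsup (q_bddAbove a hapos A) (q_bddBelow a hapos A)
  have hupper : upperDensWith a A ≤ upperDensWith b A := by
    apply le_of_eps
    intro ε hε
    have hlt : Filter.limsup
        (fun N => wSum b A N / ∑ j ∈ Finset.range (N + 1), b j) Filter.atTop
        < upperDensWith b A + ε := by
      unfold upperDensWith
      linarith
    have hev := Filter.eventually_lt_of_limsup_lt hlt (q_bddAbove b hbpos A)
    obtain ⟨M₁, hM₁⟩ := Filter.eventually_atTop.1 hev
    refine limsup_le_aux a b hapos hbpos hasum N₀ hdec A (upperDensWith b A + ε)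
      (max M₁ N₀) (le_max_right _ _) (fun N hN => ?_)
    have := hM₁ N (le_trans (le_max_left _ _) hN)
    have hBpos := sum_pos' b hbpos N
    rw [div_lt_iff₀ hBpos] at this
    linarith
  have hlower : lowerDensWith b A ≤ lowerDensWith a A := by
    apply le_of_eps
    intro ε hε
    have hlt : lowerDensWith b A - ε < Filter.liminf
        (fun N => wSum b A N / ∑ j ∈ Finset.range (N + 1), b j) Filter.atTop := by
      unfold lowerDensWith
      linarith
    have hev := Filter.eventually_lt_of_lt_liminf hlt (q_bddBelow b hbpos A)
    obtain ⟨M₁, hM₁⟩ := Filter.eventually_atTop.1 hev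
    have hb2 : ∀ N, max M₁ N₀ ≤ N →
        (lowerDensWith b A - ε) * (∑ j ∈ Finset.range (N + 1), b j) ≤ wSum b A N := by
      intro N hN
      have := hM₁ N (le_trans (le_max_left _ _) hN)
      have hBpos := sum_pos' b hbpos N
      rw [lt_div_iff₀ hBpos] at this
      linarith
    have := le_liminf_aux a b hapos hbpos hasum N₀ hdec A (lowerDensWith b A - ε)
      (max M₁ N₀) (le_max_right _ _) hb2
    linarith
  exact ⟨hlower, hmid, hupper⟩
end
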